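/- arXiv:2105.03195 — 2 statements merged into one kernel-verified Lean document; each statement's English description precedes it below -/
import Mathlib

section
/- Fix a probability distribution μ supported on the non-negative integers with |μ|_1 < 1 and with Σ_{c≥0} e^{tc}·μ(c) = ∞ for all t > 0. For n ∈ ℕ, let T_n be a Bienaymé tree with offspring distribution μ conditioned to have size n, and let n_{T_n} be the degree statistics of T_n. Then for any C > 0, with very high probability |n_{T_n}|_2² ≥ C·|n_{T_n}|_1. -/
open scoped ENNReal NNReal BigOperators
open MeasureTheory ProbabilityTheory

/-- A plane tree: a finite rooted tree with ordered children. -/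
inductive PlaneTree : Type where
  | node : List PlaneTree → PlaneTree

namespace PlaneTree

/-- The list of root subtrees of a plane tree. -/
def children : PlaneTree → List PlaneTree
  | node l => l

/-- The number of vertices of a plane tree. -/
def size : PlaneTree → ℕ
  | node l => 1 + (l.attach.map fun c => size c.1).sum
decreasing_by
  simp only [node.sizeOf_spec]
  have := List.sizeOf_lt_of_mem c.2
  omega

/-- The height of a plane tree: the maximal graph distance from the root to a vertex. -/
def height : PlaneTree → ℕ
  | node l => (l.attach.map fun c => height c.1 + 1).foldr max 0
decreasing_by
  simp only [node.sizeOf_spec]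
  have := List.sizeOf_lt_of_mem c.2
  omega

/-- The number of vertices of a plane tree at distance `k` from the root. -/
def levelCount : PlaneTree → ℕ → ℕ
  | _, 0 => 1
  | node l, k + 1 => (l.attach.map fun c => levelCount c.1 k).sum
termination_by t _ => sizeOf t
decreasing_by
  simp only [node.sizeOf_spec]
  have := List.sizeOf_lt_of_mem c.2
  omega

/-- The width of a plane tree: the maximal number of vertices on a single level. -/
def width (t : PlaneTree) : ℕ :=
  (Finset.range (t.height + 1)).sup t.levelCount

/-- The number of vertices of a plane tree having exactly `c` children. -/
def degCount : PlaneTree → ℕ → ℕ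
  | node l, c => (if l.length = c then 1 else 0) + (l.attach.map fun s => degCount s.1 c).sum
termination_by t _ => sizeOf t
decreasing_by
  simp only [node.sizeOf_spec]
  have := List.sizeOf_lt_of_mem s.2
  omega

/-- The sum over all vertices `v` of `(deg v)^2`, i.e. `|n_t|_2^2`. -/
def sumDegSq : PlaneTree → ℕ
  | node l => l.length ^ 2 + (l.attach.map fun c => sumDegSq c.1).sum
decreasing_by
  simp only [node.sizeOf_spec]
  have := List.sizeOf_lt_of_mem c.2
  omega

/-- The subtree of a plane tree rooted at the vertex reached by following the path `p`
(at each step, `i` means "move to the `i`-th child"), if that vertex exists. -/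
def subtreeAt : List ℕ → PlaneTree → Option PlaneTree
  | [], t => some t
  | i :: p, node l => l[i]?.bind (subtreeAt p)

/-- `v : List ℕ` encodes a vertex of the plane tree `t` (the root is `[]`, and the height of
a vertex is the length of its path). -/
def IsVertex (t : PlaneTree) (v : List ℕ) : Prop :=
  subtreeAt v t ≠ none

/-- The number of children of the vertex `v` of `t` (junk value `0` if `v` is not a vertex). -/
def degAt (t : PlaneTree) (v : List ℕ) : ℕ :=
  match subtreeAt v t with
  | some s => s.children.length
  | none => 0

end PlaneTree

/-- `n` is the degree statistics sequence of some plane tree: `Σ_c n(c) = 1 + Σ_c c·n(c)`. -/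
def IsDegStats (n : ℕ →₀ ℕ) : Prop :=
  n.sum (fun _ m => m) = 1 + n.sum (fun c m => c * m)

/-- `|n|_1 = Σ_c c·n(c)`. -/
def dsNorm1 (n : ℕ →₀ ℕ) : ℕ := n.sum fun c m => c * m

/-- `|n|_2² = Σ_c c²·n(c)`. -/
def dsNorm2Sq (n : ℕ →₀ ℕ) : ℕ := n.sum fun c m => c ^ 2 * m

/-- The set `𝒯_n^•` of marked plane trees `(t,v)` with degree statistics `n`. -/
def markedTrees (n : ℕ →₀ ℕ) : Set (PlaneTree × List ℕ) :=
  {tv | (∀ c, tv.1.degCount c = n c) ∧ tv.1.IsVertex tv.2}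


/-- The weight of a plane tree with respect to a weight sequence `w`:
`w(t) = ∏_{v ∈ t} w(deg_t(v))`. -/
noncomputable def treeWeight (w : ℕ → ℝ) : PlaneTree → ℝ
  | .node l => w l.length * (l.attach.map fun c => treeWeight w c.1).prod
decreasing_by
  simp only [PlaneTree.node.sizeOf_spec]
  have := List.sizeOf_lt_of_mem c.2
  omega

/-- The partition function `Z_n(w) = Σ_{plane trees t with n vertices} w(t)`. -/
noncomputable def Zn (w : ℕ → ℝ) (n : ℕ) : ℝ :=
  ∑' t : {t : PlaneTree // t.size = n}, treeWeight w t

/-- The probability that the simply generated tree of size `n` with weight sequence `w`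
(for offspring distributions `w`, the Bienaymé tree conditioned to have `n` vertices)
belongs to the set `E`. -/
noncomputable def sgProb (w : ℕ → ℝ) (n : ℕ) (E : Set PlaneTree) : ℝ :=
  (∑' t : {t : PlaneTree // t.size = n ∧ t ∈ E}, treeWeight w t) / Zn w n

/-- The expectation of `f` applied to the simply generated tree of size `n` with weight
sequence `w`. -/
noncomputable def sgExp (w : ℕ → ℝ) (n : ℕ) (f : PlaneTree → ℝ) : ℝ :=
  (∑' t : {t : PlaneTree // t.size = n}, treeWeight w t * f t) / Zn w n

/-- The probability that `(T_n, V_n) ∈ E`, where `T_n` is the simply generated tree of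
size `n` with weight sequence `w` and, given `T_n`, `V_n` is a uniformly random
vertex of `T_n` (a tree with `n` vertices has exactly `n` vertex paths). -/
noncomputable def sgMarkedProb (w : ℕ → ℝ) (n : ℕ) (E : Set (PlaneTree × List ℕ)) : ℝ :=
  (∑' tv : {tv : PlaneTree × List ℕ //
      tv.1.size = n ∧ tv.1.IsVertex tv.2 ∧ tv ∈ E}, treeWeight w (tv : _).1.1) /
    (n * Zn w n)

/-- The expectation of `f (T_n, V_n)`, where `T_n` is the simply generated tree of size `n`
with weight sequence `w` and, given `T_n`, `V_n` is a uniformly random vertex of `T_n`. -/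
noncomputable def sgMarkedExp (w : ℕ → ℝ) (n : ℕ) (f : PlaneTree × List ℕ → ℝ) : ℝ :=
  (∑' tv : {tv : PlaneTree × List ℕ // tv.1.size = n ∧ tv.1.IsVertex tv.2},
      treeWeight w (tv : _).1.1 * f tv) / (n * Zn w n)


namespace BienaymeAux

open scoped ENNReal

/-- Custom induction principle for plane trees. -/
theorem ptInd {motive : PlaneTree → Prop}
    (h : ∀ l : List PlaneTree, (∀ c ∈ l, motive c) → motive (.node l)) :
    ∀ t, motive t
  | .node l => h l (fun c hc => ptInd h c)
decreasing_by
  simp only [PlaneTree.node.sizeOf_spec]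
  have := List.sizeOf_lt_of_mem hc
  omega

theorem size_node (l : List PlaneTree) :
    (PlaneTree.node l).size = 1 + (l.map PlaneTree.size).sum := by
  rw [PlaneTree.size, List.attach_map_val]

theorem sumDegSq_node (l : List PlaneTree) :
    (PlaneTree.node l).sumDegSq = l.length ^ 2 + (l.map PlaneTree.sumDegSq).sum := by
  rw [PlaneTree.sumDegSq, List.attach_map_val]

theorem height_node (l : List PlaneTree) :
    (PlaneTree.node l).height = ((l.map fun c => c.height + 1).foldr max 0) := by
  rw [PlaneTree.height]
  congr 1
  exact List.attach_map_val (l := l) (f := fun c => c.height + 1)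

theorem size_pos (t : PlaneTree) : 0 < t.size := by
  cases t with | node l => rw [size_node]; omega

theorem treeWeight_node (w : ℕ → ℝ) (l : List PlaneTree) :
    treeWeight w (.node l) = w l.length * (l.map (treeWeight w)).prod := by
  rw [treeWeight, List.attach_map_val]

theorem height_node_lt (l : List PlaneTree) (j : ℕ) :
    (PlaneTree.node l).height < j + 1 ↔ ∀ c ∈ l, c.height < j := by
  rw [height_node]
  induction l with
  | nil => simp
  | cons c cs ih =>
    simp only [List.map_cons, List.foldr_cons, List.mem_cons]
    constructor
    · intro h x hx
      rcases hx with rfl | hx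
      · omega
      · exact ih.1 (by omega) x hx
    · intro h
      have h1 := h c (Or.inl rfl)
      have h2 := ih.2 (fun x hx => h x (Or.inr hx))
      omega

/-- Multiplicative tree weight with values in `ℝ≥0∞`. -/
noncomputable def V (w : ℕ → ℝ≥0∞) : PlaneTree → ℝ≥0∞
  | .node l => w l.length * (l.attach.map fun c => V w c.1).prod
decreasing_by
  simp only [PlaneTree.node.sizeOf_spec]
  have := List.sizeOf_lt_of_mem c.2
  omega

theorem V_node (w : ℕ → ℝ≥0∞) (l : List PlaneTree) :
    V w (.node l) = w l.length * (l.map (V w)).prod := by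
  rw [V, List.attach_map_val]

theorem treeWeight_nonneg {w : ℕ → ℝ} (hw : ∀ k, 0 ≤ w k) (t : PlaneTree) :
    0 ≤ treeWeight w t := by
  induction t using ptInd with
  | h l ih =>
    rw [treeWeight_node]
    exact mul_nonneg (hw _) (List.prod_nonneg (by simpa using ih))

theorem ofReal_treeWeight {w : ℕ → ℝ} (hw : ∀ k, 0 ≤ w k) (t : PlaneTree) :
    ENNReal.ofReal (treeWeight w t) = V (fun k => ENNReal.ofReal (w k)) t := by
  induction t using ptInd with
  | h l ih =>
    rw [treeWeight_node, V_node,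
      ENNReal.ofReal_mul (hw _)]
    congr 1
    induction l with
    | nil => simp
    | cons c cs ih2 =>
      simp only [List.map_cons, List.prod_cons, List.mem_cons] at *
      rw [ENNReal.ofReal_mul (treeWeight_nonneg hw c),
        ih c (Or.inl rfl), ih2 (fun x hx => ih x (Or.inr hx))]

end BienaymeAux
namespace BienaymeAux

noncomputable def nodeEquiv : PlaneTree ≃ List PlaneTree where
  toFun := PlaneTree.children
  invFun := .node
  left_inv t := by cases t; rfl
  right_inv l := rfl

theorem tsum_pi_prod {α : Type*} (g : α → ℝ≥0∞) (k : ℕ) :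
    ∑' f : Fin k → α, ∏ i, g (f i) = (∑' a, g a) ^ k := by
  induction k with
  | zero =>
    haveI : Unique (Fin 0 → α) := ⟨⟨Fin.elim0⟩, fun f => funext fun i => i.elim0⟩
    rw [tsum_eq_single default (fun b hb => absurd (Subsingleton.elim b default) hb)]
    simp
  | succ n ih =>
    rw [← (Fin.consEquiv (fun _ => α)).tsum_eq]
    have key : ∀ p : α × (Fin n → α),
        (∏ i, g ((Fin.consEquiv (fun _ => α)) p i)) = g p.1 * ∏ i, g (p.2 i) := by
      intro p
      rw [Fin.prod_univ_succ]
      simp [Fin.consEquiv]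
    calc ∑' p : α × (Fin n → α), ∏ i, g ((Fin.consEquiv (fun _ => α)) p i)
        = ∑' p : α × (Fin n → α), g p.1 * ∏ i, g (p.2 i) := by
          exact tsum_congr key
      _ = ∑' a : α, ∑' f : Fin n → α, g a * ∏ i, g (f i) := ENNReal.tsum_prod'
      _ = ∑' a : α, g a * ∑' f : Fin n → α, ∏ i, g (f i) := by
          exact tsum_congr fun a => ENNReal.tsum_mul_left
      _ = (∑' a, g a) * (∑' a, g a) ^ n := by rw [ENNReal.tsum_mul_right, ih]
      _ = (∑' a, g a) ^ (n + 1) := (pow_succ' _ _).symm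

noncomputable def lvl (w : ℕ → ℝ≥0∞) (j : ℕ) : ℝ≥0∞ :=
  ∑' t : PlaneTree, if t.height < j then V w t else 0

theorem prod_ite_all {k : ℕ} (P : Fin k → Prop) [DecidablePred P] (a : Fin k → ℝ≥0∞) :
    (if (∀ i, P i) then ∏ i, a i else 0) = ∏ i, (if P i then a i else 0) := by
  by_cases h : ∀ i, P i
  · rw [if_pos h]
    exact Finset.prod_congr rfl fun i _ => by rw [if_pos (h i)]
  · rw [if_neg h]
    push_neg at h
    obtain ⟨i, hi⟩ := h
    exact (Finset.prod_eq_zero (Finset.mem_univ i) (by rw [if_neg hi])).symm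

theorem lvl_succ (w : ℕ → ℝ≥0∞) (j : ℕ) :
    lvl w (j + 1) = ∑' k : ℕ, w k * lvl w j ^ k := by
  have e1 : lvl w (j + 1)
      = ∑' l : List PlaneTree, (if (PlaneTree.node l).height < j + 1
          then V w (.node l) else 0) := by
    rw [lvl, ← nodeEquiv.symm.tsum_eq]
    rfl
  have e2 : ∀ l : List PlaneTree, (if (PlaneTree.node l).height < j + 1
          then V w (.node l) else 0)
      = w l.length * (l.map fun c => if c.height < j then V w c else 0).prod := by
    intro l
    rw [V_node]
    by_cases h : ∀ c ∈ l, c.height < j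
    · rw [if_pos ((height_node_lt l j).2 h)]
      congr 1
      induction l with
      | nil => simp
      | cons c cs ih =>
        simp only [List.map_cons, List.prod_cons]
        rw [if_pos (h c (List.mem_cons_self)),
          ih (fun x hx => h x (List.mem_cons_of_mem c hx))]
    · rw [if_neg (fun hh => h ((height_node_lt l j).1 hh))]
      push_neg at h
      obtain ⟨c, hc, hcj⟩ := h
      rw [List.prod_eq_zero (by
        refine List.mem_map.2 ⟨c, hc, ?_⟩
        rw [if_neg (by omega)]), mul_zero]
  rw [e1]
  calc ∑' l : List PlaneTree, (if (PlaneTree.node l).height < j + 1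
          then V w (.node l) else 0)
      = ∑' l : List PlaneTree,
          w l.length * (l.map fun c => if c.height < j then V w c else 0).prod :=
        tsum_congr e2
    _ = ∑' p : (k : ℕ) × (Fin k → PlaneTree),
          w p.1 * ((List.ofFn p.2).map fun c => if c.height < j then V w c else 0).prod := by
        rw [← (List.equivSigmaTuple (α := PlaneTree)).symm.tsum_eq]
        refine tsum_congr fun p => ?_
        rcases p with ⟨k, f⟩
        simp [List.equivSigmaTuple]
    _ = ∑' k : ℕ, ∑' f : Fin k → PlaneTree,
          w k * ∏ i, (if (f i).height < j then V w (f i) else 0) := by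
        rw [ENNReal.tsum_sigma']
        refine tsum_congr fun k => tsum_congr fun f => ?_
        rw [List.map_ofFn, List.prod_ofFn]
        rfl
    _ = ∑' k : ℕ, w k * lvl w j ^ k := by
        refine tsum_congr fun k => ?_
        rw [ENNReal.tsum_mul_left]
        congr 1
        exact tsum_pi_prod (fun c => if c.height < j then V w c else 0) k

theorem lvl_mono (w : ℕ → ℝ≥0∞) : Monotone (lvl w) := by
  intro i j hij
  refine Summable.tsum_le_tsum (fun t => ?_) ENNReal.summable ENNReal.summable
  split_ifs with h1 h2
  · exact le_rfl
  · omega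
  · exact zero_le
  · exact le_rfl

theorem tsum_V_eq_iSup_lvl (w : ℕ → ℝ≥0∞) : ∑' t, V w t = ⨆ j, lvl w j := by
  apply le_antisymm
  · rw [ENNReal.tsum_eq_iSup_sum]
    apply iSup_le
    intro s
    refine le_trans ?_ (le_iSup _ ((s.sup fun t => t.height) + 1))
    rw [lvl]
    calc ∑ t ∈ s, V w t
        = ∑ t ∈ s, (if t.height < (s.sup fun t => t.height) + 1 then V w t else 0) := by
          refine Finset.sum_congr rfl fun t ht => ?_
          exact (if_pos (Nat.lt_succ_of_le (Finset.le_sup (f := fun t : PlaneTree => t.height) ht))).symm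
      _ ≤ _ := ENNReal.sum_le_tsum s
  · apply iSup_le
    intro j
    refine Summable.tsum_le_tsum (fun t => ?_) ENNReal.summable ENNReal.summable
    split_ifs
    · exact le_rfl
    · exact zero_le

theorem lvl_le (w : ℕ → ℝ≥0∞) {Y : ℝ≥0∞} (hY : ∑' k, w k * Y ^ k ≤ Y) (j : ℕ) :
    lvl w j ≤ Y := by
  induction j with
  | zero =>
    have : lvl w 0 = 0 := by
      rw [lvl]
      simp
    rw [this]; exact zero_le
  | succ n ih =>
    rw [lvl_succ]
    refine le_trans (Summable.tsum_le_tsum (fun k => ?_) ENNReal.summable ENNReal.summable) hY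
    exact mul_le_mul_right (pow_le_pow_left' ih k) _

theorem tsum_V_le (w : ℕ → ℝ≥0∞) {Y : ℝ≥0∞} (hY : ∑' k, w k * Y ^ k ≤ Y) :
    ∑' t, V w t ≤ Y := by
  rw [tsum_V_eq_iSup_lvl]
  exact iSup_le (lvl_le w hY)

end BienaymeAux
namespace BienaymeAux

def graft : PlaneTree → PlaneTree → PlaneTree
  | .node [], t' => t'
  | .node (c :: cs), t' => .node (graft c t' :: cs)
termination_by t _ => sizeOf t
decreasing_by
  simp only [PlaneTree.node.sizeOf_spec, List.cons.sizeOf_spec]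
  omega

theorem size_graft (t' : PlaneTree) : ∀ t : PlaneTree,
    (graft t t').size + 1 = t.size + t'.size := by
  refine ptInd (fun l ih => ?_)
  cases l with
  | nil =>
    rw [graft, size_node]
    simp only [List.map_nil, List.sum_nil]
    omega
  | cons c cs =>
    rw [graft, size_node, size_node]
    have := ih c (List.mem_cons_self)
    simp only [List.map_cons, List.sum_cons]
    omega

theorem V_graft (w : ℕ → ℝ≥0∞) (t' : PlaneTree) : ∀ t : PlaneTree,
    w 0 * V w (graft t t') = V w t * V w t' := by
  refine ptInd (fun l ih => ?_)
  cases l with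
  | nil =>
    rw [graft, V_node]
    simp [mul_comm]
  | cons c cs =>
    rw [graft, V_node, V_node]
    simp only [List.map_cons, List.prod_cons, List.length_cons]
    have := ih c (List.mem_cons_self)
    calc w 0 * (w (cs.length + 1) * (V w (graft c t') * (cs.map (V w)).prod))
        = w (cs.length + 1) * ((w 0 * V w (graft c t')) * (cs.map (V w)).prod) := by ring
      _ = w (cs.length + 1) * ((V w c * V w t') * (cs.map (V w)).prod) := by rw [this]
      _ = w (cs.length + 1) * (V w c * (cs.map (V w)).prod) * V w t' := by ring

theorem graft_inj : ∀ t₁ t₂ t₁' t₂' : PlaneTree, t₁.size = t₂.size →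
    graft t₁ t₁' = graft t₂ t₂' → t₁ = t₂ ∧ t₁' = t₂' := by
  refine ptInd (fun l₁ ih => ?_)
  intro t₂ t₁' t₂' hsz hg
  cases t₂ with | node l₂ =>
  cases l₁ with
  | nil =>
    cases l₂ with
    | nil =>
      rw [graft, graft] at hg
      exact ⟨rfl, hg⟩
    | cons c₂ cs₂ =>
      exfalso
      rw [size_node, size_node] at hsz
      have := size_pos c₂
      simp only [List.map_cons, List.sum_cons, List.map_nil, List.sum_nil] at hsz
      omega
  | cons c₁ cs₁ =>
    cases l₂ with
    | nil =>
      exfalso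
      rw [size_node, size_node] at hsz
      have := size_pos c₁
      simp only [List.map_cons, List.sum_cons, List.map_nil, List.sum_nil] at hsz
      omega
    | cons c₂ cs₂ =>
      rw [graft, graft] at hg
      simp only [PlaneTree.node.injEq, List.cons.injEq] at hg
      obtain ⟨hg1, hg2⟩ := hg
      rw [size_node, size_node] at hsz
      simp only [List.map_cons, List.sum_cons, hg2] at hsz
      have hsz' : c₁.size = c₂.size := by omega
      obtain ⟨he1, he2⟩ := ih c₁ (List.mem_cons_self) c₂ t₁' t₂' hsz' hg1
      exact ⟨by rw [he1, hg2], he2⟩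

theorem tsum_mul_tsum {α β : Type*} (f : α → ℝ≥0∞) (g : β → ℝ≥0∞) :
    (∑' a, f a) * (∑' b, g b) = ∑' p : α × β, f p.1 * g p.2 := by
  rw [ENNReal.tsum_prod']
  calc (∑' a, f a) * ∑' b, g b = ∑' a, f a * ∑' b, g b := ENNReal.tsum_mul_right.symm
    _ = ∑' (a : α) (b : β), f a * g b := tsum_congr fun a => ENNReal.tsum_mul_left.symm

/-- The `ℝ≥0∞`-valued partition function. -/
noncomputable def ZE (w : ℕ → ℝ≥0∞) (n : ℕ) : ℝ≥0∞ :=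
  ∑' t : {t : PlaneTree // t.size = n}, V w t.1

theorem ZE_supermul (w : ℕ → ℝ≥0∞) (x y : ℕ) :
    ZE w (x + 1) * ZE w (y + 1) ≤ w 0 * ZE w (x + y + 1) := by
  rw [ZE, ZE, tsum_mul_tsum]
  have key : ∀ p : {t : PlaneTree // t.size = x + 1} × {t : PlaneTree // t.size = y + 1},
      V w p.1.1 * V w p.2.1 = w 0 * V w (graft p.1.1 p.2.1) := by
    intro p
    rw [V_graft]
  rw [tsum_congr key, ENNReal.tsum_mul_left]
  refine mul_le_mul_right ?_ _
  have hG : ∀ p : {t : PlaneTree // t.size = x + 1} × {t : PlaneTree // t.size = y + 1},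
      (graft p.1.1 p.2.1).size = x + y + 1 := by
    intro p
    have := size_graft p.2.1 p.1.1
    rw [p.1.2, p.2.2] at this
    omega
  have hinj : Function.Injective
      (fun p : {t : PlaneTree // t.size = x + 1} × {t : PlaneTree // t.size = y + 1} =>
        (⟨graft p.1.1 p.2.1, hG p⟩ : {t : PlaneTree // t.size = x + y + 1})) := by
    intro p q hpq
    simp only [Subtype.mk.injEq] at hpq
    have hsz : p.1.1.size = q.1.1.size := by rw [p.1.2, q.1.2]
    obtain ⟨h1, h2⟩ := graft_inj p.1.1 q.1.1 p.2.1 q.2.1 hsz hpq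
    exact Prod.ext (Subtype.ext h1) (Subtype.ext h2)
  exact ENNReal.tsum_comp_le_tsum_of_injective hinj
    (fun r : {t : PlaneTree // t.size = x + y + 1} => V w r.1)

theorem tsum_V_eq_tsum_ZE (w : ℕ → ℝ≥0∞) : ∑' t, V w t = ∑' n, ZE w n := by
  rw [← (Equiv.sigmaFiberEquiv (fun t : PlaneTree => t.size)).tsum_eq (V w),
    ENNReal.tsum_sigma']
  rfl

theorem ZE_le_tsum_V (w : ℕ → ℝ≥0∞) (n : ℕ) : ZE w n ≤ ∑' t, V w t :=
  ENNReal.tsum_comp_le_tsum_of_injective Subtype.val_injective (V w)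

end BienaymeAux
namespace BienaymeAux

theorem exp_le_one_add_self_mul {y : ℝ} (hy : 0 ≤ y) :
    Real.exp y ≤ 1 + y * Real.exp y := by
  rcases le_or_gt 1 y with h | h
  · nlinarith [Real.exp_pos y]
  · have h1 : 1 - y ≤ Real.exp (-y) := by
      have := Real.add_one_le_exp (-y)
      linarith
    have h2 : Real.exp y * Real.exp (-y) = 1 := by
      rw [← Real.exp_add]
      simp
    nlinarith [Real.exp_pos y, Real.exp_pos (-y)]

theorem exp_quad_le {a τ x : ℝ} (ha : 0 < a) (hτ : 0 < τ) (hx : 0 ≤ x) :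
    Real.exp (a * x - τ * x ^ 2) ≤ 1 + a * x * Real.exp (a ^ 2 / (4 * τ)) := by
  obtain ⟨y, hy⟩ : ∃ y, y = a * x - τ * x ^ 2 := ⟨_, rfl⟩
  rw [← hy]
  have key1 : y ≤ a ^ 2 / (4 * τ) := by
    rw [hy, le_div_iff₀ (by linarith)]
    nlinarith [sq_nonneg (a - 2 * τ * x)]
  rcases le_or_gt y 0 with h | h
  · have h3 : Real.exp y ≤ 1 := Real.exp_le_one_iff.2 h
    have h4 : 0 ≤ a * x * Real.exp (a ^ 2 / (4 * τ)) := by positivity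
    linarith
  · have h1 : Real.exp y ≤ 1 + y * Real.exp y := exp_le_one_add_self_mul h.le
    have h2 : y * Real.exp y ≤ a * x * Real.exp (a ^ 2 / (4 * τ)) := by
      have hyx : y ≤ a * x := by rw [hy]; nlinarith [sq_nonneg x]
      exact mul_le_mul hyx (Real.exp_le_exp.2 key1) (Real.exp_pos y).le
        (by nlinarith)
    linarith

theorem exists_params {C r : ℝ} (hC : 0 < C) (hr0 : 0 ≤ r) (hr1 : r < 1) :
    ∃ σ η : ℝ, 0 < σ ∧ 0 ≤ η ∧
      (σ + Real.log (1 + η)) * Real.exp ((σ + Real.log (1 + η)) ^ 2 / (4 * (σ / (2 * C)))) * r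
        ≤ η := by
  rcases eq_or_lt_of_le hr0 with h0 | h0
  · exact ⟨1, 0, one_pos, le_rfl, by rw [← h0]; simp⟩
  have h1r : (0:ℝ) < 1 - r := by linarith
  have h1rne : (1:ℝ) - r ≠ 0 := ne_of_gt h1r
  have hCne : C ≠ 0 := ne_of_gt hC
  have hrne : r ≠ 0 := ne_of_gt h0
  obtain ⟨L, hL⟩ : ∃ L, L = Real.log ((1 + r) / (2 * r)) := ⟨_, rfl⟩
  have hLpos : 0 < L := by
    rw [hL]
    apply Real.log_pos
    rw [lt_div_iff₀ (by linarith)]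
    linarith
  obtain ⟨σ, hσ⟩ : ∃ σ, σ = (1 - r) ^ 2 / (2 * C) * L := ⟨_, rfl⟩
  have hσpos : 0 < σ := by
    rw [hσ]
    exact mul_pos (div_pos (by positivity) (by linarith)) hLpos
  obtain ⟨η, hη⟩ : ∃ η, η = σ * (1 + r) / (1 - r) := ⟨_, rfl⟩
  have hηpos : 0 < η := by
    rw [hη]
    exact div_pos (by nlinarith) h1r
  refine ⟨σ, η, hσpos, hηpos.le, ?_⟩
  obtain ⟨a, ha⟩ : ∃ a, a = σ + Real.log (1 + η) := ⟨_, rfl⟩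
  rw [← ha]
  have halog : Real.log (1 + η) ≤ η := by
    have := Real.log_le_sub_one_of_pos (x := 1 + η) (by linarith)
    linarith
  have hapos : 0 < a := by
    have : 0 ≤ Real.log (1 + η) := Real.log_nonneg (by linarith)
    rw [ha]; linarith
  have hale : a ≤ 2 * σ / (1 - r) := by
    have hse : σ + η = 2 * σ / (1 - r) := by
      rw [hη]
      field_simp
      ring
    rw [ha, ← hse]
    linarith
  have hquad : a ^ 2 / (4 * (σ / (2 * C))) ≤ L := by
    have hden : 4 * (σ / (2 * C)) = 2 * σ / C := by
      field_simp
      ring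
    rw [hden, div_le_iff₀ (by positivity)]
    have hsq : a ^ 2 ≤ (2 * σ / (1 - r)) ^ 2 := pow_le_pow_left₀ hapos.le hale 2
    have hLσ : L * (2 * σ / C) = (2 * σ / (1 - r)) ^ 2 := by
      rw [hσ]
      field_simp
    linarith
  have hEle : Real.exp (a ^ 2 / (4 * (σ / (2 * C)))) ≤ (1 + r) / (2 * r) := by
    calc Real.exp (a ^ 2 / (4 * (σ / (2 * C)))) ≤ Real.exp L := Real.exp_le_exp.2 hquad
      _ = (1 + r) / (2 * r) := by rw [hL]; exact Real.exp_log (by positivity)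
  calc a * Real.exp (a ^ 2 / (4 * (σ / (2 * C)))) * r
      ≤ (2 * σ / (1 - r)) * ((1 + r) / (2 * r)) * r := by
        apply mul_le_mul_of_nonneg_right _ hr0
        exact mul_le_mul hale hEle (Real.exp_pos _).le (by positivity)
    _ = η := by
        rw [hη]
        field_simp

end BienaymeAux
namespace BienaymeAux

theorem mu_summable {μ : ℕ → ℝ} (hprob : ∑' k, μ k = 1) : Summable μ := by
  by_contra h
  rw [tsum_eq_zero_of_not_summable h] at hprob
  norm_num at hprob

theorem V_tilt (σ τ : ℝ) {μ : ℕ → ℝ} (hpos : ∀ k, 0 ≤ μ k) :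
    ∀ t : PlaneTree,
      V (fun k => ENNReal.ofReal (Real.exp (σ * k - τ * (k : ℝ) ^ 2) * μ k)) t
        = ENNReal.ofReal (Real.exp (σ * ((t.size : ℝ) - 1) - τ * (t.sumDegSq : ℝ)))
            * V (fun k => ENNReal.ofReal (μ k)) t := by
  refine ptInd (fun l ih => ?_)
  have aux : ∀ L : List PlaneTree, (∀ c ∈ L,
      V (fun k => ENNReal.ofReal (Real.exp (σ * k - τ * (k : ℝ) ^ 2) * μ k)) c
        = ENNReal.ofReal (Real.exp (σ * ((c.size : ℝ) - 1) - τ * (c.sumDegSq : ℝ)))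
            * V (fun k => ENNReal.ofReal (μ k)) c) →
      (L.map (V (fun k => ENNReal.ofReal (Real.exp (σ * k - τ * (k : ℝ) ^ 2) * μ k)))).prod
        = ENNReal.ofReal (Real.exp (σ * ((((L.map PlaneTree.size).sum : ℕ) : ℝ)
              - (L.length : ℝ)) - τ * (((L.map PlaneTree.sumDegSq).sum : ℕ) : ℝ)))
            * (L.map (V (fun k => ENNReal.ofReal (μ k)))).prod := by
    intro L
    induction L with
    | nil =>
      intro _
      simp
    | cons c cs ih2 =>
      intro hall
      simp only [List.map_cons, List.prod_cons, List.sum_cons, List.length_cons]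
      rw [hall c (List.mem_cons_self), ih2 (fun x hx => hall x (List.mem_cons_of_mem c hx))]
      rw [mul_mul_mul_comm, ← ENNReal.ofReal_mul (Real.exp_nonneg _), ← Real.exp_add]
      congr 2
      push_cast
      ring
  rw [V_node, V_node, aux l ih, size_node, sumDegSq_node]
  rw [ENNReal.ofReal_mul (Real.exp_nonneg _)]
  rw [mul_mul_mul_comm, ← ENNReal.ofReal_mul (Real.exp_nonneg _), ← Real.exp_add]
  congr 2
  push_cast
  ring

theorem tsum_tilt_le {μ : ℕ → ℝ} (hpos : ∀ k, 0 ≤ μ k) (hsum : Summable μ)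
    (hprob : ∑' k, μ k = 1) (hmsum : Summable fun k : ℕ => (k : ℝ) * μ k)
    {r : ℝ} (hr : ∑' k : ℕ, (k : ℝ) * μ k = r)
    {σ τ η : ℝ} (hσ : 0 < σ) (hτ : 0 < τ) (hη : 0 ≤ η)
    (hkey : (σ + Real.log (1 + η)) * Real.exp ((σ + Real.log (1 + η)) ^ 2 / (4 * τ)) * r
      ≤ η) :
    ∑' k : ℕ, ENNReal.ofReal (Real.exp (σ * k - τ * (k : ℝ) ^ 2) * μ k)
        * ENNReal.ofReal (1 + η) ^ k
      ≤ ENNReal.ofReal (1 + η) := by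
  obtain ⟨a, ha⟩ : ∃ a, a = σ + Real.log (1 + η) := ⟨_, rfl⟩
  rw [← ha] at hkey
  have hapos : 0 < a := by
    have : 0 ≤ Real.log (1 + η) := Real.log_nonneg (by linarith)
    rw [ha]; linarith
  have h1η : (0:ℝ) < 1 + η := by linarith
  have hterm : ∀ k : ℕ, ENNReal.ofReal (Real.exp (σ * k - τ * (k : ℝ) ^ 2) * μ k)
      * ENNReal.ofReal (1 + η) ^ k
      = ENNReal.ofReal (Real.exp (a * k - τ * (k : ℝ) ^ 2) * μ k) := by
    intro k
    rw [← ENNReal.ofReal_pow h1η.le,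
      ← ENNReal.ofReal_mul (mul_nonneg (Real.exp_nonneg _) (hpos k))]
    congr 1
    have hpow : (1 + η) ^ k = Real.exp (k * Real.log (1 + η)) := by
      rw [Real.exp_nat_mul, Real.exp_log h1η]
    rw [mul_comm (Real.exp (σ * k - τ * (k:ℝ)^2) * μ k) _, hpow, ← mul_assoc,
      ← Real.exp_add, ha]
    ring_nf
  have hgle : ∀ k : ℕ, Real.exp (a * k - τ * (k : ℝ) ^ 2) * μ k
      ≤ μ k + a * Real.exp (a ^ 2 / (4 * τ)) * ((k : ℝ) * μ k) := by
    intro k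
    have h1 := exp_quad_le (a := a) (τ := τ) (x := (k : ℝ)) hapos hτ (Nat.cast_nonneg k)
    calc Real.exp (a * k - τ * (k : ℝ) ^ 2) * μ k
        ≤ (1 + a * k * Real.exp (a ^ 2 / (4 * τ))) * μ k :=
          mul_le_mul_of_nonneg_right h1 (hpos k)
      _ = μ k + a * Real.exp (a ^ 2 / (4 * τ)) * ((k : ℝ) * μ k) := by ring
  have hgsum : Summable fun k : ℕ => Real.exp (a * k - τ * (k : ℝ) ^ 2) * μ k := by
    refine Summable.of_nonneg_of_le (fun k => mul_nonneg (Real.exp_nonneg _) (hpos k)) hgle ?_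
    exact hsum.add (hmsum.mul_left _)
  have hsle : ∑' k : ℕ, Real.exp (a * k - τ * (k : ℝ) ^ 2) * μ k ≤ 1 + η := by
    have h2 : ∑' k : ℕ, (μ k + a * Real.exp (a ^ 2 / (4 * τ)) * ((k : ℝ) * μ k))
        = 1 + a * Real.exp (a ^ 2 / (4 * τ)) * r := by
      rw [Summable.tsum_add hsum (hmsum.mul_left _), hprob, tsum_mul_left, hr]
    have h3 := Summable.tsum_le_tsum hgle hgsum (hsum.add (hmsum.mul_left _))
    rw [h2] at h3
    have h4 : a * Real.exp (a ^ 2 / (4 * τ)) * r ≤ η := hkey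
    linarith
  calc ∑' k : ℕ, ENNReal.ofReal (Real.exp (σ * k - τ * (k : ℝ) ^ 2) * μ k)
          * ENNReal.ofReal (1 + η) ^ k
      = ∑' k : ℕ, ENNReal.ofReal (Real.exp (a * k - τ * (k : ℝ) ^ 2) * μ k) :=
        tsum_congr hterm
    _ = ENNReal.ofReal (∑' k : ℕ, Real.exp (a * k - τ * (k : ℝ) ^ 2) * μ k) :=
        (ENNReal.ofReal_tsum_of_nonneg (fun k => mul_nonneg (Real.exp_nonneg _) (hpos k)) hgsum).symm
    _ ≤ ENNReal.ofReal (1 + η) := ENNReal.ofReal_le_ofReal hsle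

theorem tsum_V_m_le_one {μ : ℕ → ℝ} (hpos : ∀ k, 0 ≤ μ k) (hsum : Summable μ)
    (hprob : ∑' k, μ k = 1) :
    ∑' t, V (fun k => ENNReal.ofReal (μ k)) t ≤ 1 := by
  refine tsum_V_le _ (Y := 1) ?_
  have : ∑' k : ℕ, ENNReal.ofReal (μ k) * (1:ℝ≥0∞) ^ k = ∑' k : ℕ, ENNReal.ofReal (μ k) := by
    refine tsum_congr fun k => by rw [one_pow, mul_one]
  rw [this, ← ENNReal.ofReal_tsum_of_nonneg hpos hsum, hprob, ENNReal.ofReal_one]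

end BienaymeAux
namespace BienaymeAux

theorem num_bound {μ : ℕ → ℝ} (hpos : ∀ k, 0 ≤ μ k)
    {σ τ C : ℝ} (hτ0 : 0 ≤ τ) {Y : ℝ≥0∞}
    (htot : ∑' t : PlaneTree,
      V (fun k => ENNReal.ofReal (Real.exp (σ * k - τ * (k : ℝ) ^ 2) * μ k)) t ≤ Y)
    (n : ℕ) :
    ∑' t : {t : PlaneTree // t.size = n ∧ (t.sumDegSq : ℝ) < C * ((t.size : ℝ) - 1)},
        V (fun k => ENNReal.ofReal (μ k)) t.1
      ≤ ENNReal.ofReal (Real.exp (-(σ - τ * C) * ((n : ℝ) - 1))) * Y := by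
  have hpt : ∀ t : {t : PlaneTree // t.size = n ∧ (t.sumDegSq : ℝ) < C * ((t.size : ℝ) - 1)},
      V (fun k => ENNReal.ofReal (μ k)) t.1
        ≤ ENNReal.ofReal (Real.exp (-(σ - τ * C) * ((n : ℝ) - 1)))
            * V (fun k => ENNReal.ofReal (Real.exp (σ * k - τ * (k : ℝ) ^ 2) * μ k)) t.1 := by
    rintro ⟨t, htn, hev⟩
    have hid := V_tilt σ τ hpos t
    have hinv : V (fun k => ENNReal.ofReal (μ k)) t
        = ENNReal.ofReal (Real.exp (-(σ * ((t.size : ℝ) - 1) - τ * (t.sumDegSq : ℝ))))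
            * V (fun k => ENNReal.ofReal (Real.exp (σ * k - τ * (k : ℝ) ^ 2) * μ k)) t := by
      rw [hid, ← mul_assoc, ← ENNReal.ofReal_mul (Real.exp_nonneg _), ← Real.exp_add]
      norm_num
    rw [hinv]
    refine mul_le_mul_left (ENNReal.ofReal_le_ofReal (Real.exp_le_exp.2 ?_)) _
    rw [htn] at hev ⊢
    have h2 : τ * (t.sumDegSq : ℝ) ≤ τ * (C * ((n : ℝ) - 1)) :=
      mul_le_mul_of_nonneg_left hev.le hτ0
    nlinarith [h2]
  calc ∑' t : {t : PlaneTree // t.size = n ∧ (t.sumDegSq : ℝ) < C * ((t.size : ℝ) - 1)},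
        V (fun k => ENNReal.ofReal (μ k)) t.1
      ≤ ∑' t : {t : PlaneTree // t.size = n ∧ (t.sumDegSq : ℝ) < C * ((t.size : ℝ) - 1)},
          ENNReal.ofReal (Real.exp (-(σ - τ * C) * ((n : ℝ) - 1)))
            * V (fun k => ENNReal.ofReal (Real.exp (σ * k - τ * (k : ℝ) ^ 2) * μ k)) t.1 :=
        Summable.tsum_le_tsum hpt ENNReal.summable ENNReal.summable
    _ = ENNReal.ofReal (Real.exp (-(σ - τ * C) * ((n : ℝ) - 1)))
          * ∑' t : {t : PlaneTree // t.size = n ∧ (t.sumDegSq : ℝ) < C * ((t.size : ℝ) - 1)},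
              V (fun k => ENNReal.ofReal (Real.exp (σ * k - τ * (k : ℝ) ^ 2) * μ k)) t.1 :=
        ENNReal.tsum_mul_left
    _ ≤ _ := by
        refine mul_le_mul_right (le_trans ?_ htot) _
        exact ENNReal.tsum_comp_le_tsum_of_injective Subtype.val_injective _

theorem V_smul (c : ℝ≥0∞) (w : ℕ → ℝ≥0∞) : ∀ t : PlaneTree,
    V (fun k => c * w k) t = c ^ t.size * V w t := by
  refine ptInd (fun l ih => ?_)
  have aux : ∀ L : List PlaneTree, (∀ x ∈ L, V (fun k => c * w k) x = c ^ x.size * V w x) →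
      (L.map (V (fun k => c * w k))).prod
        = c ^ (L.map PlaneTree.size).sum * (L.map (V w)).prod := by
    intro L
    induction L with
    | nil => intro _; simp
    | cons x xs ih2 =>
      intro hall
      simp only [List.map_cons, List.prod_cons, List.sum_cons]
      rw [hall x (List.mem_cons_self), ih2 (fun z hz => hall z (List.mem_cons_of_mem x hz)),
        pow_add]
      ring
  rw [V_node, V_node, aux l ih, size_node, pow_add, pow_one]
  ring

theorem ZE_smul (c : ℝ≥0∞) (w : ℕ → ℝ≥0∞) (n : ℕ) :
    ZE (fun k => c * w k) n = c ^ n * ZE w n := by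
  rw [ZE, ZE, ← ENNReal.tsum_mul_left]
  refine tsum_congr fun t => ?_
  rw [V_smul, t.2]

theorem pow_iSup_mono (f : ℕ → ℝ≥0∞) (k : ℕ) : (⨆ j, f j) ^ k = ⨆ j, f j ^ k := by
  cases k with
  | zero => simp
  | succ n =>
    exact Monotone.map_iSup_of_continuousAt (f := fun x : ℝ≥0∞ => x ^ (n + 1))
      ((ENNReal.continuous_pow (n + 1)).continuousAt)
      (fun a b hab => pow_le_pow_left' hab _) (by simp)

theorem tsum_iSup_mono {f : ℕ → ℕ → ℝ≥0∞} (hm : ∀ k, Monotone fun j => f j k) :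
    ∑' k, ⨆ j, f j k = ⨆ j, ∑' k, f j k := by
  rw [ENNReal.tsum_eq_iSup_sum]
  have h1 : ∀ s : Finset ℕ, ∑ k ∈ s, ⨆ j, f j k = ⨆ j, ∑ k ∈ s, f j k := fun s =>
    ENNReal.finsetSum_iSup_of_monotone fun k => hm k
  calc ⨆ s : Finset ℕ, ∑ k ∈ s, ⨆ j, f j k
      = ⨆ s : Finset ℕ, ⨆ j, ∑ k ∈ s, f j k := by simp_rw [h1]
    _ = ⨆ j, ⨆ s : Finset ℕ, ∑ k ∈ s, f j k := iSup_comm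
    _ = ⨆ j, ∑' k, f j k := by simp_rw [← ENNReal.tsum_eq_iSup_sum]

end BienaymeAux
namespace BienaymeAux

theorem tsum_V_y_top {μ : ℕ → ℝ} (hpos : ∀ k, 0 ≤ μ k) (hsum : Summable μ)
    (hprob : ∑' k, μ k = 1) (hmsum : Summable fun k : ℕ => (k : ℝ) * μ k)
    {r : ℝ} (hr : ∑' k : ℕ, (k : ℝ) * μ k = r) (hr0 : 0 ≤ r) (hr1 : r < 1)
    (hmgf : ∀ s : ℝ, 0 < s → ∑' k : ℕ, ENNReal.ofReal (Real.exp (s * k) * μ k) = ⊤)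
    {y : ℝ} (hy : 1 < y) :
    ∑' t : PlaneTree, V (fun k => ENNReal.ofReal y * ENNReal.ofReal (μ k)) t = ⊤ := by
  by_contra hfin
  obtain ⟨T, hT⟩ : ∃ T, T = ∑' t : PlaneTree,
      V (fun k => ENNReal.ofReal y * ENNReal.ofReal (μ k)) t := ⟨_, rfl⟩
  have hTne : T ≠ ⊤ := by rw [hT]; exact hfin
  have hstep : ∀ j, lvl (fun k => ENNReal.ofReal y * ENNReal.ofReal (μ k)) (j + 1)
      = ENNReal.ofReal y * ∑' k : ℕ, ENNReal.ofReal (μ k)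
          * lvl (fun k => ENNReal.ofReal y * ENNReal.ofReal (μ k)) j ^ k := by
    intro j
    rw [lvl_succ, ← ENNReal.tsum_mul_left]
    exact tsum_congr fun k => by ring
  have hTsup : T = ⨆ j, lvl (fun k => ENNReal.ofReal y * ENNReal.ofReal (μ k)) j := by
    rw [hT, tsum_V_eq_iSup_lvl]
  have hsup1 : T = ⨆ j, lvl (fun k => ENNReal.ofReal y * ENNReal.ofReal (μ k)) (j + 1) := by
    refine le_antisymm ?_ ?_
    · rw [hTsup]
      exact iSup_le fun j => le_trans (lvl_mono _ (Nat.le_succ j))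
        (le_iSup (fun i => lvl (fun k => ENNReal.ofReal y * ENNReal.ofReal (μ k)) (i + 1)) j)
    · rw [hTsup]
      exact iSup_le fun j => le_iSup (lvl (fun k => ENNReal.ofReal y * ENNReal.ofReal (μ k))) (j + 1)
  have hmonok : ∀ k : ℕ, Monotone fun j => ENNReal.ofReal (μ k)
      * lvl (fun k => ENNReal.ofReal y * ENNReal.ofReal (μ k)) j ^ k :=
    fun k a b hab => mul_le_mul_right (pow_le_pow_left' (lvl_mono _ hab) k) _
  have hEq : T = ENNReal.ofReal y * ∑' k : ℕ, ENNReal.ofReal (μ k) * T ^ k := by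
    calc T = ⨆ j, lvl (fun k => ENNReal.ofReal y * ENNReal.ofReal (μ k)) (j + 1) := hsup1
      _ = ⨆ j, ENNReal.ofReal y * ∑' k : ℕ, ENNReal.ofReal (μ k)
            * lvl (fun k => ENNReal.ofReal y * ENNReal.ofReal (μ k)) j ^ k :=
          iSup_congr hstep
      _ = ENNReal.ofReal y * ⨆ j, ∑' k : ℕ, ENNReal.ofReal (μ k)
            * lvl (fun k => ENNReal.ofReal y * ENNReal.ofReal (μ k)) j ^ k :=
          (ENNReal.mul_iSup _ _).symm
      _ = ENNReal.ofReal y * ∑' k : ℕ, ⨆ j, ENNReal.ofReal (μ k)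
            * lvl (fun k => ENNReal.ofReal y * ENNReal.ofReal (μ k)) j ^ k := by
          rw [tsum_iSup_mono hmonok]
      _ = ENNReal.ofReal y * ∑' k : ℕ, ENNReal.ofReal (μ k) * T ^ k := by
          congr 1
          refine tsum_congr fun k => ?_
          rw [← ENNReal.mul_iSup, ← pow_iSup_mono, ← hTsup]
  rcases lt_or_ge (1 : ℝ≥0∞) T with h1T | hT1
  · have hTr : 1 < T.toReal := by
      have := (ENNReal.toReal_lt_toReal (by norm_num) hTne).2 h1T
      simpa using this
    have hs : 0 < Real.log T.toReal := Real.log_pos hTr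
    have htop := hmgf _ hs
    have heq2 : ∀ k : ℕ, ENNReal.ofReal (Real.exp (Real.log T.toReal * k) * μ k)
        = ENNReal.ofReal (μ k) * T ^ k := by
      intro k
      rw [mul_comm (Real.log T.toReal) (k : ℝ), Real.exp_nat_mul,
        Real.exp_log (by linarith)]
      rw [ENNReal.ofReal_mul (pow_nonneg (by linarith) k), ENNReal.ofReal_pow (by linarith),
        ENNReal.ofReal_toReal hTne, mul_comm]
    rw [tsum_congr heq2] at htop
    rw [htop, ENNReal.mul_top (ne_of_gt (ENNReal.ofReal_pos.2 (by linarith)))] at hEq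
    exact hTne hEq
  · have hφne : (∑' k : ℕ, ENNReal.ofReal (μ k) * T ^ k) ≠ ⊤ := by
      have hφle : (∑' k : ℕ, ENNReal.ofReal (μ k) * T ^ k) ≤ 1 := by
        calc (∑' k : ℕ, ENNReal.ofReal (μ k) * T ^ k) ≤ ∑' k : ℕ, ENNReal.ofReal (μ k) := by
              refine Summable.tsum_le_tsum (fun k => ?_) ENNReal.summable ENNReal.summable
              calc ENNReal.ofReal (μ k) * T ^ k ≤ ENNReal.ofReal (μ k) * 1 :=
                    mul_le_mul_right (pow_le_one' hT1 k) _
                _ = ENNReal.ofReal (μ k) := mul_one _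
          _ = 1 := by rw [← ENNReal.ofReal_tsum_of_nonneg hpos hsum, hprob, ENNReal.ofReal_one]
      exact (hφle.trans_lt ENNReal.one_lt_top).ne
    have ht0 : 0 ≤ T.toReal := ENNReal.toReal_nonneg
    have ht1 : T.toReal ≤ 1 := by
      have := ENNReal.toReal_mono (by norm_num) hT1
      simpa using this
    have hterm_ne : ∀ k : ℕ, ENNReal.ofReal (μ k) * T ^ k ≠ ⊤ :=
      fun k => ENNReal.mul_ne_top ENNReal.ofReal_ne_top (ENNReal.pow_ne_top hTne)
    have hreal : T.toReal = y * ∑' k : ℕ, μ k * T.toReal ^ k := by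
      have h1 := congrArg ENNReal.toReal hEq
      rw [ENNReal.toReal_mul, ENNReal.toReal_ofReal (by linarith : (0:ℝ) ≤ y),
        ENNReal.tsum_toReal_eq hterm_ne] at h1
      have h2 : ∀ k : ℕ, (ENNReal.ofReal (μ k) * T ^ k).toReal = μ k * T.toReal ^ k := by
        intro k
        rw [ENNReal.toReal_mul, ENNReal.toReal_pow, ENNReal.toReal_ofReal (hpos k)]
      rw [tsum_congr h2] at h1
      exact h1
    have hber : ∀ k : ℕ, μ k - (1 - T.toReal) * ((k : ℝ) * μ k) ≤ μ k * T.toReal ^ k := by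
      intro k
      have h2 : 1 + (k : ℝ) * (T.toReal - 1) ≤ T.toReal ^ k := by
        have h3 := one_add_mul_le_pow (a := T.toReal - 1) (by linarith) k
        calc 1 + (k : ℝ) * (T.toReal - 1) ≤ (1 + (T.toReal - 1)) ^ k := h3
          _ = T.toReal ^ k := by norm_num
      calc μ k - (1 - T.toReal) * ((k : ℝ) * μ k) = (1 + (k : ℝ) * (T.toReal - 1)) * μ k := by
            ring
        _ ≤ T.toReal ^ k * μ k := mul_le_mul_of_nonneg_right h2 (hpos k)
        _ = μ k * T.toReal ^ k := mul_comm _ _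
    have hsleft : Summable fun k : ℕ => μ k - (1 - T.toReal) * ((k : ℝ) * μ k) :=
      hsum.sub (hmsum.mul_left _)
    have hsright : Summable fun k : ℕ => μ k * T.toReal ^ k := by
      refine Summable.of_nonneg_of_le (fun k => mul_nonneg (hpos k) (pow_nonneg ht0 k))
        (fun k => ?_) hsum
      calc μ k * T.toReal ^ k ≤ μ k * 1 :=
            mul_le_mul_of_nonneg_left (pow_le_one₀ ht0 ht1) (hpos k)
        _ = μ k := mul_one _
    have hlow : 1 - (1 - T.toReal) * r ≤ ∑' k : ℕ, μ k * T.toReal ^ k := by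
      have h3 := Summable.tsum_le_tsum hber hsleft hsright
      rw [Summable.tsum_sub hsum (hmsum.mul_left _), hprob, tsum_mul_left, hr] at h3
      exact h3
    have h5 : y * (1 - (1 - T.toReal) * r) ≤ T.toReal := by
      conv_rhs => rw [hreal]
      exact mul_le_mul_of_nonneg_left hlow (by linarith)
    rcases le_or_gt (y * r) 1 with hc | hc
    · nlinarith [h5, mul_nonneg (by linarith : (0:ℝ) ≤ 1 - T.toReal)
        (by linarith : (0:ℝ) ≤ 1 - y * r)]
    · nlinarith [h5, mul_nonneg ht0 (by linarith : (0:ℝ) ≤ y * r - 1)]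

end BienaymeAux
namespace BienaymeAux

theorem exists_big_ZE {μ : ℕ → ℝ} (hpos : ∀ k, 0 ≤ μ k) (hsum : Summable μ)
    (hprob : ∑' k, μ k = 1) (hmsum : Summable fun k : ℕ => (k : ℝ) * μ k)
    {r : ℝ} (hr : ∑' k : ℕ, (k : ℝ) * μ k = r) (hr0 : 0 ≤ r) (hr1 : r < 1)
    (hmgf : ∀ s : ℝ, 0 < s → ∑' k : ℕ, ENNReal.ofReal (Real.exp (s * k) * μ k) = ⊤)
    {δ : ℝ} (hδ : 0 < δ) (X : ℕ) :
    ∃ n : ℕ, X ≤ n ∧ ENNReal.ofReal (Real.exp (-δ * n))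
      < ZE (fun k => ENNReal.ofReal (μ k)) n := by
  by_contra hcon
  push_neg at hcon
  have hy : 1 < Real.exp (δ / 2) := by
    rw [← Real.exp_zero]
    exact Real.exp_lt_exp.2 (by linarith)
  have htop := tsum_V_y_top hpos hsum hprob hmsum hr hr0 hr1 hmgf hy
  have hdec : ∑' t : PlaneTree,
      V (fun k => ENNReal.ofReal (Real.exp (δ / 2)) * ENNReal.ofReal (μ k)) t
      = ∑' n : ℕ, ENNReal.ofReal (Real.exp (δ / 2)) ^ n
          * ZE (fun k => ENNReal.ofReal (μ k)) n := by
    rw [tsum_V_eq_tsum_ZE]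
    exact tsum_congr fun n => ZE_smul _ _ n
  have hbnd : ∀ n : ℕ, ENNReal.ofReal (Real.exp (δ / 2)) ^ n
        * ZE (fun k => ENNReal.ofReal (μ k)) n
      ≤ (if n < X then ENNReal.ofReal (Real.exp (δ / 2)) ^ n else 0)
          + ENNReal.ofReal (Real.exp (-(δ / 2))) ^ n := by
    intro n
    rcases lt_or_ge n X with hn | hn
    · rw [if_pos hn]
      refine le_trans ?_ le_self_add
      calc ENNReal.ofReal (Real.exp (δ / 2)) ^ n * ZE (fun k => ENNReal.ofReal (μ k)) n
          ≤ ENNReal.ofReal (Real.exp (δ / 2)) ^ n * 1 := by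
            refine mul_le_mul_right ?_ _
            exact le_trans (ZE_le_tsum_V _ n) (tsum_V_m_le_one hpos hsum hprob)
        _ = ENNReal.ofReal (Real.exp (δ / 2)) ^ n := mul_one _
    · rw [if_neg (not_lt.2 hn), zero_add]
      calc ENNReal.ofReal (Real.exp (δ / 2)) ^ n * ZE (fun k => ENNReal.ofReal (μ k)) n
          ≤ ENNReal.ofReal (Real.exp (δ / 2)) ^ n * ENNReal.ofReal (Real.exp (-δ * n)) :=
            mul_le_mul_right (hcon n hn) _
        _ = ENNReal.ofReal (Real.exp (-(δ / 2))) ^ n := by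
            rw [← ENNReal.ofReal_pow (Real.exp_nonneg _),
              ← ENNReal.ofReal_mul (pow_nonneg (Real.exp_nonneg _) n),
              ← ENNReal.ofReal_pow (Real.exp_nonneg _)]
            congr 1
            rw [← Real.exp_nat_mul, ← Real.exp_nat_mul, ← Real.exp_add]
            congr 1
            ring
  have hρlt : ENNReal.ofReal (Real.exp (-(δ / 2))) < 1 := by
    rw [ENNReal.ofReal_lt_one]
    rw [Real.exp_lt_one_iff]
    linarith
  have hsumfin : (∑' n : ℕ, ((if n < X then ENNReal.ofReal (Real.exp (δ / 2)) ^ n else 0)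
      + ENNReal.ofReal (Real.exp (-(δ / 2))) ^ n)) ≠ ⊤ := by
    rw [ENNReal.tsum_add]
    refine ENNReal.add_ne_top.2 ⟨?_, ?_⟩
    · rw [tsum_eq_sum (s := Finset.range X)
        (fun b hb => if_neg (by simpa using hb))]
      refine (ENNReal.sum_lt_top.2 fun a _ => ?_).ne
      split_ifs
      · exact ENNReal.pow_lt_top ENNReal.ofReal_lt_top
      · norm_num
    · rw [ENNReal.tsum_geometric]
      rw [Ne, ENNReal.inv_eq_top]
      intro hzero
      rw [tsub_eq_zero_iff_le] at hzero
      exact absurd (lt_of_lt_of_le hρlt hzero) (lt_irrefl _)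
  apply hsumfin
  have h1 : (⊤ : ℝ≥0∞) = ∑' n : ℕ, ENNReal.ofReal (Real.exp (δ / 2)) ^ n
      * ZE (fun k => ENNReal.ofReal (μ k)) n := by rw [← hdec, htop]
  exact eq_top_iff.2 (h1 ▸ Summable.tsum_le_tsum hbnd ENNReal.summable ENNReal.summable)

end BienaymeAux
namespace BienaymeAux

theorem semigroup_gcd_cofinite {P : Set ℕ} (hadd : ∀ x ∈ P, ∀ y ∈ P, x + y ∈ P)
    {x₁ : ℕ} (hx₁ : x₁ ∈ P) (hx₁pos : 0 < x₁) :
    ∃ g : ℕ, 0 < g ∧ (∀ x ∈ P, g ∣ x) ∧ ∃ R : ℕ, ∀ z, R ≤ z → g ∣ z → z ∈ P := by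
  classical
  obtain ⟨gZ, hgZ⟩ := Int.subgroup_cyclic (AddSubgroup.closure ((fun n : ℕ => (n : ℤ)) '' P))
  refine ⟨gZ.natAbs, ?_, ?_, ?_⟩
  case refine_2 =>
    intro x hx
    have hxH : (x : ℤ) ∈ AddSubgroup.closure ((fun n : ℕ => (n : ℤ)) '' P) :=
      AddSubgroup.subset_closure ⟨x, hx, rfl⟩
    rw [hgZ, AddSubgroup.mem_closure_singleton] at hxH
    obtain ⟨n, hn⟩ := hxH
    have : gZ ∣ (x : ℤ) := Dvd.intro_left n (by rw [← hn]; simp [zsmul_eq_mul])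
    have h2 : (gZ.natAbs : ℤ) ∣ (x : ℤ) := (Int.natAbs_dvd).2 this
    exact_mod_cast h2
  case refine_1 =>
    rcases Nat.eq_zero_or_pos gZ.natAbs with h0 | h
    · exfalso
      have hxH : (x₁ : ℤ) ∈ AddSubgroup.closure ((fun n : ℕ => (n : ℤ)) '' P) :=
        AddSubgroup.subset_closure ⟨x₁, hx₁, rfl⟩
      rw [hgZ, AddSubgroup.mem_closure_singleton] at hxH
      obtain ⟨n, hn⟩ := hxH
      have hz : gZ = 0 := Int.natAbs_eq_zero.1 h0
      rw [hz] at hn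
      simp at hn
      omega
    · exact h
  -- cofiniteness
  have hgdvd : ∀ x ∈ P, gZ.natAbs ∣ x := by
    intro x hx
    have hxH : (x : ℤ) ∈ AddSubgroup.closure ((fun n : ℕ => (n : ℤ)) '' P) :=
      AddSubgroup.subset_closure ⟨x, hx, rfl⟩
    rw [hgZ, AddSubgroup.mem_closure_singleton] at hxH
    obtain ⟨n, hn⟩ := hxH
    have : gZ ∣ (x : ℤ) := Dvd.intro_left n (by rw [← hn]; simp [zsmul_eq_mul])
    have h2 : (gZ.natAbs : ℤ) ∣ (x : ℤ) := (Int.natAbs_dvd).2 this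
    exact_mod_cast h2
  have hgpos : 0 < gZ.natAbs := by
    rcases Nat.eq_zero_or_pos gZ.natAbs with h0 | h
    · exfalso
      obtain ⟨w, hw⟩ := hgdvd x₁ hx₁
      rw [h0] at hw
      omega
    · exact h
  -- representation gZ = p - q with p q ∈ P ∪ {0}
  have hrep : ∃ p q : ℕ, (p = 0 ∨ p ∈ P) ∧ (q = 0 ∨ q ∈ P) ∧ gZ = (p : ℤ) - (q : ℤ) := by
    have hgH : gZ ∈ AddSubgroup.closure ((fun n : ℕ => (n : ℤ)) '' P) := by
      rw [hgZ]
      exact AddSubgroup.subset_closure rfl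
    refine AddSubgroup.closure_induction ?_ ?_ ?_ ?_ hgH
    · rintro x ⟨x', hx', rfl⟩
      exact ⟨x', 0, Or.inr hx', Or.inl rfl, by simp⟩
    · exact ⟨0, 0, Or.inl rfl, Or.inl rfl, by simp⟩
    · rintro x y _ _ ⟨p1, q1, hp1, hq1, rfl⟩ ⟨p2, q2, hp2, hq2, rfl⟩
      refine ⟨p1 + p2, q1 + q2, ?_, ?_, by push_cast; ring⟩
      · rcases hp1 with rfl | hp1
        · simpa using hp2
        · rcases hp2 with rfl | hp2
          · simpa using Or.inr hp1
          · exact Or.inr (hadd _ hp1 _ hp2)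
      · rcases hq1 with rfl | hq1
        · simpa using hq2
        · rcases hq2 with rfl | hq2
          · simpa using Or.inr hq1
          · exact Or.inr (hadd _ hq1 _ hq2)
    · rintro x _ ⟨p1, q1, hp1, hq1, rfl⟩
      exact ⟨q1, p1, hq1, hp1, by ring⟩
  obtain ⟨p', q', hp', hq', heq⟩ := hrep
  -- normalize : ∃ p q ∈ P₀ with p = q + g
  have hnorm : ∃ p q : ℕ, (p = 0 ∨ p ∈ P) ∧ (q = 0 ∨ q ∈ P) ∧ p = q + gZ.natAbs := by
    have h2 : p' = q' + gZ.natAbs ∨ q' = p' + gZ.natAbs := by omega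
    rcases h2 with h2 | h2
    · exact ⟨p', q', hp', hq', h2⟩
    · exact ⟨q', p', hq', hp', h2⟩
  obtain ⟨p, q, hp, hq, hpq⟩ := hnorm
  -- membership of nonneg combinations
  have hmem0 : ∀ a x : ℕ, (x = 0 ∨ x ∈ P) → (a * x = 0 ∨ a * x ∈ P) := by
    intro a
    induction a with
    | zero => intro x _; exact Or.inl (by ring)
    | succ b ih =>
      intro x hx
      rcases hx with rfl | hx
      · exact Or.inl (by ring)
      · rcases ih x (Or.inr hx) with h0 | h
        · rw [Nat.succ_mul]
          rw [h0, zero_add]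
          exact Or.inr hx
        · rw [Nat.succ_mul]
          exact Or.inr (hadd _ h _ hx)
  have haddc : ∀ x y : ℕ, (x = 0 ∨ x ∈ P) → (y = 0 ∨ y ∈ P) → (x + y = 0 ∨ x + y ∈ P) := by
    rintro x y (rfl | hx) (rfl | hy)
    · exact Or.inl rfl
    · exact Or.inr (by simpa using hy)
    · exact Or.inr (by simpa using hx)
    · exact Or.inr (hadd _ hx _ hy)
  refine ⟨q * q + 1, fun z hz hdvd => ?_⟩
  obtain ⟨w, rfl⟩ := hdvd
  have hzpos : 1 ≤ gZ.natAbs * w := by omega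
  have hgq : gZ.natAbs ∣ q := by
    rcases hq with rfl | hq
    · exact dvd_zero _
    · exact hgdvd q hq
  obtain ⟨q', rfl⟩ := hgq
  rcases Nat.eq_zero_or_pos q' with rfl | hq'pos
  · -- q = 0, so p = gZ.natAbs
    have hpg : p = gZ.natAbs := by omega
    have hpP : p ∈ P := by
      rcases hp with rfl | hp
      · omega
      · exact hp
    rcases hmem0 w p (Or.inr hpP) with h0 | h
    · exfalso
      rcases Nat.mul_eq_zero.1 h0 with h1 | h1
      · subst h1
        simp at hzpos
      · omega
    · have heq3 : gZ.natAbs * w = w * p := by rw [hpg]; ring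
      rw [heq3]
      exact h
  · -- main case : q = gZ.natAbs * q' with q' > 0
    have hq'w : q' * q' ≤ w := by
      have h1 : gZ.natAbs * (q' * q') ≤ gZ.natAbs * w := by
        calc gZ.natAbs * (q' * q') ≤ (gZ.natAbs * q') * (gZ.natAbs * q') := by nlinarith
          _ ≤ gZ.natAbs * w := by omega
      exact Nat.le_of_mul_le_mul_left h1 hgpos
    have hdm := Nat.div_add_mod w q'
    have hq'a : q' ≤ w / q' := (Nat.le_div_iff_mul_le hq'pos).2 hq'w
    have hrq : w % q' < q' := Nat.mod_lt _ hq'pos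
    obtain ⟨r, hrdef⟩ : ∃ r, r = w % q' := ⟨_, rfl⟩
    obtain ⟨b, hb⟩ : ∃ b, w / q' = b + r := ⟨w / q' - r, by omega⟩
    rw [hb, ← hrdef] at hdm
    have hz2 : gZ.natAbs * w = b * (gZ.natAbs * q') + r * p := by
      rw [← hdm, hpq]
      ring
    rw [hz2]
    rcases haddc _ _ (hmem0 b _ hq) (hmem0 r p hp) with h0 | h
    · exfalso
      rw [← hz2] at h0
      omega
    · exact h

end BienaymeAux
namespace BienaymeAux

noncomputable def zeta (μ : ℕ → ℝ) (x : ℕ) : ℝ :=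
  (ZE (fun k => ENNReal.ofReal (μ k)) (x + 1)).toReal

theorem zeta_nonneg (μ : ℕ → ℝ) (x : ℕ) : 0 ≤ zeta μ x := ENNReal.toReal_nonneg

theorem ZE_le_one {μ : ℕ → ℝ} (hpos : ∀ k, 0 ≤ μ k) (hsum : Summable μ)
    (hprob : ∑' k, μ k = 1) (n : ℕ) :
    ZE (fun k => ENNReal.ofReal (μ k)) n ≤ 1 :=
  le_trans (ZE_le_tsum_V _ n) (tsum_V_m_le_one hpos hsum hprob)

theorem ZE_ne_top {μ : ℕ → ℝ} (hpos : ∀ k, 0 ≤ μ k) (hsum : Summable μ)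
    (hprob : ∑' k, μ k = 1) (n : ℕ) :
    ZE (fun k => ENNReal.ofReal (μ k)) n ≠ ⊤ :=
  ((ZE_le_one hpos hsum hprob n).trans_lt ENNReal.one_lt_top).ne

theorem zeta_supermul {μ : ℕ → ℝ} (hpos : ∀ k, 0 ≤ μ k) (hsum : Summable μ)
    (hprob : ∑' k, μ k = 1) (x y : ℕ) :
    zeta μ x * zeta μ y ≤ μ 0 * zeta μ (x + y) := by
  have h1 := ZE_supermul (fun k => ENNReal.ofReal (μ k)) x y
  have h2 := ENNReal.toReal_mono
    (ENNReal.mul_ne_top ENNReal.ofReal_ne_top (ZE_ne_top hpos hsum hprob (x + y + 1))) h1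
  rw [ENNReal.toReal_mul, ENNReal.toReal_mul, ENNReal.toReal_ofReal (hpos 0)] at h2
  exact h2

theorem zeta_pos {μ : ℕ → ℝ} (hpos : ∀ k, 0 ≤ μ k) (hsum : Summable μ)
    (hprob : ∑' k, μ k = 1) {x : ℕ}
    (h : 0 < ZE (fun k => ENNReal.ofReal (μ k)) (x + 1)) : 0 < zeta μ x :=
  ENNReal.toReal_pos (ne_of_gt h) (ZE_ne_top hpos hsum hprob (x + 1))

theorem ZE_lower {μ : ℕ → ℝ} (hpos : ∀ k, 0 ≤ μ k) (hsum : Summable μ)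
    (hprob : ∑' k, μ k = 1) (hmsum : Summable fun k : ℕ => (k : ℝ) * μ k)
    {r : ℝ} (hr : ∑' k : ℕ, (k : ℝ) * μ k = r) (hr0 : 0 ≤ r) (hr1 : r < 1)
    (hmgf : ∀ s : ℝ, 0 < s → ∑' k : ℕ, ENNReal.ofReal (Real.exp (s * k) * μ k) = ⊤)
    (hμ0 : 0 < μ 0) {δ : ℝ} (hδ : 0 < δ) :
    ∃ N : ℕ, ∀ n : ℕ, N ≤ n → 0 < ZE (fun k => ENNReal.ofReal (μ k)) n →
      ENNReal.ofReal (Real.exp (-δ * n)) ≤ ZE (fun k => ENNReal.ofReal (μ k)) n := by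
  classical
  have hμ0le : μ 0 ≤ 1 := by
    have := Summable.le_tsum hsum 0 (fun j _ => hpos j)
    rwa [hprob] at this
  have hPadd : ∀ x ∈ {x : ℕ | 0 < zeta μ x}, ∀ y ∈ {x : ℕ | 0 < zeta μ x},
      x + y ∈ {x : ℕ | 0 < zeta μ x} := by
    intro x hx y hy
    have h1 := zeta_supermul hpos hsum hprob x y
    have h3 : 0 < μ 0 * zeta μ (x + y) := lt_of_lt_of_le (mul_pos hx hy) h1
    by_contra hcon
    simp only [Set.mem_setOf_eq, not_lt] at hcon
    rw [le_antisymm hcon (zeta_nonneg μ (x + y)), mul_zero] at h3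
    exact lt_irrefl _ h3
  obtain ⟨n₁, hn₁2, hn₁⟩ := exists_big_ZE hpos hsum hprob hmsum hr hr0 hr1 hmgf
    one_pos 2
  have hx₁ : n₁ - 1 ∈ {x : ℕ | 0 < zeta μ x} := by
    have he : n₁ - 1 + 1 = n₁ := by omega
    have hZpos : 0 < ZE (fun k => ENNReal.ofReal (μ k)) n₁ :=
      lt_of_le_of_lt (zero_le) hn₁
    rw [← he] at hZpos
    exact zeta_pos hpos hsum hprob hZpos
  obtain ⟨g, hgpos, hgdvd, R, hR⟩ := semigroup_gcd_cofinite hPadd hx₁ (by omega)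
  obtain ⟨n₀, hn₀2, hn₀⟩ := exists_big_ZE hpos hsum hprob hmsum hr hr0 hr1 hmgf
    (by positivity : (0:ℝ) < δ / 8) 2
  obtain ⟨x₀, hx₀⟩ : ∃ x₀, n₀ = x₀ + 1 := ⟨n₀ - 1, by omega⟩
  have hx₀1 : 1 ≤ x₀ := by omega
  have hx₀pos : 0 < x₀ := hx₀1
  have hζx₀ : Real.exp (-(δ / 4) * x₀) ≤ zeta μ x₀ := by
    have h1 : Real.exp (-(δ / 8) * n₀) ≤ zeta μ x₀ := by
      rw [zeta, ← hx₀]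
      exact (ENNReal.ofReal_le_iff_le_toReal (ZE_ne_top hpos hsum hprob n₀)).1 hn₀.le
    refine le_trans ?_ h1
    apply Real.exp_le_exp.2
    rw [hx₀]
    have hcast : (1:ℝ) ≤ (x₀ : ℝ) := by exact_mod_cast hx₀1
    push_cast
    nlinarith
  have hx₀P : x₀ ∈ {x : ℕ | 0 < zeta μ x} :=
    lt_of_lt_of_le (Real.exp_pos _) hζx₀
  have hgx₀ : g ∣ x₀ := hgdvd x₀ hx₀P
  obtain ⟨W, hW⟩ : ∃ W : Finset ℕ, W = (Finset.Ico (R + 1) (R + 1 + x₀)).filter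
    (fun z => g ∣ z) := ⟨_, rfl⟩
  have hWP : ∀ z ∈ W, 0 < zeta μ z := by
    intro z hz
    rw [hW, Finset.mem_filter, Finset.mem_Ico] at hz
    exact hR z (by omega) hz.2
  obtain ⟨c₀, hc₀⟩ : ∃ c₀ : ℝ, c₀ = if hWne : W.Nonempty then W.inf' hWne (zeta μ) else 1 :=
    ⟨_, rfl⟩
  have hc₀pos : 0 < c₀ := by
    rw [hc₀]
    split_ifs with hWne
    · exact (Finset.lt_inf'_iff hWne).2 fun i hi => hWP i hi
    · exact one_pos
  have hc₀le : ∀ z ∈ W, c₀ ≤ zeta μ z := by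
    intro z hz
    rw [hc₀, dif_pos ⟨z, hz⟩]
    exact Finset.inf'_le _ hz
  have hudiv : ∀ x : ℕ, zeta μ x ≤ zeta μ x / μ 0 := by
    intro x
    rw [le_div_iff₀ hμ0]
    nlinarith [zeta_nonneg μ x]
  have husm : ∀ a b : ℕ, (zeta μ a / μ 0) * (zeta μ b / μ 0) ≤ zeta μ (a + b) / μ 0 := by
    intro a b
    rw [div_mul_div_comm, div_le_div_iff₀ (by positivity) hμ0]
    have h := mul_le_mul_of_nonneg_right (zeta_supermul hpos hsum hprob a b) hμ0.le
    exact h.trans_eq (by ring)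
  have hupow : ∀ k : ℕ, 1 ≤ k → ∀ x : ℕ,
      (zeta μ x / μ 0) ^ k ≤ zeta μ (k * x) / μ 0 := by
    intro k
    induction k with
    | zero => omega
    | succ b ih =>
      intro _ x
      rcases Nat.eq_zero_or_pos b with rfl | hb
      · simp
      · calc (zeta μ x / μ 0) ^ (b + 1) = (zeta μ x / μ 0) ^ b * (zeta μ x / μ 0) :=
              pow_succ _ _
          _ ≤ (zeta μ (b * x) / μ 0) * (zeta μ x / μ 0) :=
              mul_le_mul_of_nonneg_right (ih hb x) (div_nonneg (zeta_nonneg μ x) hμ0.le)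
          _ ≤ zeta μ (b * x + x) / μ 0 := husm _ _
          _ = zeta μ ((b + 1) * x) / μ 0 := by rw [Nat.succ_mul]
  obtain ⟨N₂, hN₂⟩ := exists_nat_ge ((4 / (3 * δ)) * (-Real.log (μ 0 * c₀)))
  refine ⟨max (R + x₀ + 2) (N₂ + 1) + 1, fun n hn hZpos => ?_⟩
  obtain ⟨x, rfl⟩ : ∃ x, n = x + 1 := ⟨n - 1, by omega⟩
  have hxR : R + x₀ + 2 ≤ x := by omega
  have hxN₂ : N₂ ≤ x := by omega
  have hζx : 0 < zeta μ x := zeta_pos hpos hsum hprob hZpos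
  have hgx : g ∣ x := hgdvd x hζx
  obtain ⟨qq, hqq⟩ : ∃ qq, qq = (x - (R + 1)) / x₀ := ⟨_, rfl⟩
  obtain ⟨s, hs⟩ : ∃ s, s = (x - (R + 1)) % x₀ := ⟨_, rfl⟩
  have hslt : s < x₀ := hs ▸ Nat.mod_lt _ hx₀pos
  have hdm' : qq * x₀ + s = x - (R + 1) := by
    rw [hqq, hs, mul_comm]
    exact Nat.div_add_mod _ _
  have hxeq : x = qq * x₀ + (R + 1 + s) := by omega
  have hqq1 : 1 ≤ qq := by
    rw [hqq]
    exact (Nat.one_le_div_iff hx₀pos).2 (by omega)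
  have hrrW : R + 1 + s ∈ W := by
    rw [hW, Finset.mem_filter, Finset.mem_Ico]
    refine ⟨⟨by omega, by omega⟩, ?_⟩
    have hd1 : g ∣ qq * x₀ := Dvd.dvd.mul_left hgx₀ qq
    have hd2 : g ∣ x - qq * x₀ := Nat.dvd_sub hgx hd1
    have he : x - qq * x₀ = R + 1 + s := by omega
    rwa [he] at hd2
  have main : μ 0 * ((zeta μ x₀ / μ 0) ^ qq * c₀) ≤ zeta μ x := by
    calc μ 0 * ((zeta μ x₀ / μ 0) ^ qq * c₀)
        ≤ μ 0 * ((zeta μ (qq * x₀) / μ 0) * (zeta μ (R + 1 + s) / μ 0)) := by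
          refine mul_le_mul_of_nonneg_left ?_ hμ0.le
          refine mul_le_mul (hupow qq hqq1 x₀)
            (le_trans (hc₀le _ hrrW) (hudiv _)) hc₀pos.le
            (div_nonneg (zeta_nonneg μ _) hμ0.le)
      _ ≤ μ 0 * (zeta μ (qq * x₀ + (R + 1 + s)) / μ 0) :=
          mul_le_mul_of_nonneg_left (husm _ _) hμ0.le
      _ = zeta μ x := by
          rw [← hxeq]
          field_simp
  have hexp1 : Real.exp (-(δ / 4) * x) ≤ (zeta μ x₀ / μ 0) ^ qq := by
    have h7 : Real.exp (-(δ / 4) * x₀) ^ qq ≤ (zeta μ x₀ / μ 0) ^ qq :=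
      pow_le_pow_left₀ (Real.exp_nonneg _) (hζx₀.trans (hudiv x₀)) qq
    have h8 : Real.exp (-(δ / 4) * x₀) ^ qq = Real.exp (-(δ / 4) * (qq * x₀ : ℕ)) := by
      rw [← Real.exp_nat_mul]
      congr 1
      push_cast
      ring
    have h9 : Real.exp (-(δ / 4) * x) ≤ Real.exp (-(δ / 4) * (qq * x₀ : ℕ)) := by
      apply Real.exp_le_exp.2
      have hle : (qq * x₀ : ℕ) ≤ x := by omega
      have hle' : ((qq * x₀ : ℕ) : ℝ) ≤ (x : ℝ) := by exact_mod_cast hle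
      nlinarith
    calc Real.exp (-(δ / 4) * x) ≤ Real.exp (-(δ / 4) * (qq * x₀ : ℕ)) := h9
      _ = Real.exp (-(δ / 4) * x₀) ^ qq := h8.symm
      _ ≤ (zeta μ x₀ / μ 0) ^ qq := h7
  have hlogpart : Real.exp (-δ - 3 * δ / 4 * x) ≤ μ 0 * c₀ := by
    have hlog : -δ - 3 * δ / 4 * x ≤ Real.log (μ 0 * c₀) := by
      have h10 : (4 / (3 * δ)) * (-Real.log (μ 0 * c₀)) ≤ (x : ℝ) := by
        have : (N₂ : ℝ) ≤ (x : ℝ) := by exact_mod_cast hxN₂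
        linarith
      have h11 : -Real.log (μ 0 * c₀) ≤ 3 * δ / 4 * x := by
        have h12 := mul_le_mul_of_nonneg_left h10 (by positivity : (0:ℝ) ≤ 3 * δ / 4)
        calc -Real.log (μ 0 * c₀)
            = 3 * δ / 4 * ((4 / (3 * δ)) * (-Real.log (μ 0 * c₀))) := by
              field_simp
          _ ≤ 3 * δ / 4 * x := h12
      linarith
    calc Real.exp (-δ - 3 * δ / 4 * x) ≤ Real.exp (Real.log (μ 0 * c₀)) :=
        Real.exp_le_exp.2 hlog
      _ = μ 0 * c₀ := Real.exp_log (by positivity)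
  have hfin : Real.exp (-δ * ((x : ℝ) + 1)) ≤ μ 0 * ((zeta μ x₀ / μ 0) ^ qq * c₀) := by
    have hsplit : Real.exp (-δ * ((x : ℝ) + 1))
        = Real.exp (-δ - 3 * δ / 4 * x) * Real.exp (-(δ / 4) * x) := by
      rw [← Real.exp_add]
      congr 1
      ring
    calc Real.exp (-δ * ((x : ℝ) + 1))
        = Real.exp (-δ - 3 * δ / 4 * x) * Real.exp (-(δ / 4) * x) := hsplit
      _ ≤ (μ 0 * c₀) * (zeta μ x₀ / μ 0) ^ qq := by
          refine mul_le_mul hlogpart hexp1 (Real.exp_nonneg _)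
            (mul_nonneg hμ0.le hc₀pos.le)
      _ = μ 0 * ((zeta μ x₀ / μ 0) ^ qq * c₀) := by ring
  rw [ENNReal.ofReal_le_iff_le_toReal (ZE_ne_top hpos hsum hprob (x + 1))]
  have hcast : (((x + 1 : ℕ)) : ℝ) = (x : ℝ) + 1 := by push_cast; ring
  calc Real.exp (-δ * ((x + 1 : ℕ) : ℝ)) = Real.exp (-δ * ((x : ℝ) + 1)) := by rw [hcast]
    _ ≤ μ 0 * ((zeta μ x₀ / μ 0) ^ qq * c₀) := hfin
    _ ≤ zeta μ x := main

end BienaymeAux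
/-- **Proposition (degree statistics, zero radius case).** For a subcritical offspring
distribution `μ` whose moment generating function is everywhere infinite, for any `C > 0`,
with very high probability `|n_{T_n}|_2² ≥ C |n_{T_n}|_1`. -/
theorem bienayme_subcritical_heavy_tail_degree_stats (μ : ℕ → ℝ) (hpos : ∀ k, 0 ≤ μ k)
    (hprob : ∑' k, μ k = 1)
    (hmom1 : ∑' k : ℕ, (k : ℝ≥0∞) * ENNReal.ofReal (μ k) < 1)
    (hmgf : ∀ s : ℝ, 0 < s → ∑' k : ℕ, ENNReal.ofReal (Real.exp (s * k) * μ k) = ⊤) :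
    ∀ C : ℝ, 0 < C → ∃ c : ℝ, 0 < c ∧ ∃ N : ℕ, ∀ n ≥ N, 0 < Zn μ n →
      sgProb μ n {t : PlaneTree | (t.sumDegSq : ℝ) < C * ((t.size : ℝ) - 1)} ≤
        Real.exp (-c * n) := by
  classical
  intro C hC
  open BienaymeAux in
  have hμsum : Summable μ := mu_summable hprob
  have hmEne : (∑' k : ℕ, (k : ℝ≥0∞) * ENNReal.ofReal (μ k)) ≠ ⊤ :=
    (hmom1.trans ENNReal.one_lt_top).ne
  have htermeq : ∀ k : ℕ, ((k : ℝ≥0∞) * ENNReal.ofReal (μ k)).toReal = (k : ℝ) * μ k := by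
    intro k
    rw [ENNReal.toReal_mul, ENNReal.toReal_ofReal (hpos k)]
    simp
  have hmsum : Summable fun k : ℕ => (k : ℝ) * μ k := by
    have h1 := ENNReal.summable_toReal hmEne
    exact (summable_congr htermeq).1 h1
  obtain ⟨r, hr⟩ : ∃ r : ℝ, ∑' k : ℕ, (k : ℝ) * μ k = r := ⟨_, rfl⟩
  have hr0 : 0 ≤ r :=
    hr ▸ tsum_nonneg (fun k => mul_nonneg (Nat.cast_nonneg k) (hpos k))
  have hr1 : r < 1 := by
    have h2 : (∑' k : ℕ, (k : ℝ≥0∞) * ENNReal.ofReal (μ k)).toReal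
        = ∑' k : ℕ, ((k : ℝ≥0∞) * ENNReal.ofReal (μ k)).toReal :=
      ENNReal.tsum_toReal_eq fun k =>
        ENNReal.mul_ne_top (ENNReal.natCast_ne_top k) ENNReal.ofReal_ne_top
    have h3 : (∑' k : ℕ, (k : ℝ≥0∞) * ENNReal.ofReal (μ k)).toReal < 1 := by
      have := (ENNReal.toReal_lt_toReal hmEne (by norm_num)).2 hmom1
      simpa using this
    rw [h2, tsum_congr htermeq, hr] at h3
    exact h3
  have hμ0 : 0 < μ 0 := by
    have ht1 : ∑' k : ℕ, μ k = μ 0 + ∑' k : ℕ, μ (k + 1) := Summable.tsum_eq_zero_add hμsum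
    have hsum1 : Summable fun k : ℕ => μ (k + 1) := (summable_nat_add_iff 1).2 hμsum
    have hsum2 : Summable fun k : ℕ => ((k + 1 : ℕ) : ℝ) * μ (k + 1) :=
      (summable_nat_add_iff 1).2 hmsum
    have ht2 : ∑' k : ℕ, μ (k + 1) ≤ ∑' k : ℕ, ((k + 1 : ℕ) : ℝ) * μ (k + 1) := by
      refine Summable.tsum_le_tsum (fun k => ?_) hsum1 hsum2
      refine le_mul_of_one_le_left (hpos _) ?_
      exact_mod_cast Nat.succ_le_succ (Nat.zero_le k)
    have ht3 : ∑' k : ℕ, ((k + 1 : ℕ) : ℝ) * μ (k + 1) = r := by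
      have h4 : ∑' k : ℕ, (k : ℝ) * μ k
          = ((0 : ℕ) : ℝ) * μ 0 + ∑' k : ℕ, ((k + 1 : ℕ) : ℝ) * μ (k + 1) :=
        Summable.tsum_eq_zero_add hmsum
      rw [hr] at h4
      simpa using h4.symm
    rw [hprob] at ht1
    rw [ht3] at ht2
    linarith
  obtain ⟨σ, η, hσ, hη, hkey⟩ := exists_params hC hr0 hr1
  have hτpos : 0 < σ / (2 * C) := by positivity
  have htiltsum := tsum_tilt_le hpos hμsum hprob hmsum hr hσ hτpos hη hkey
  have htot : ∑' t : PlaneTree,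
      V (fun k => ENNReal.ofReal (Real.exp (σ * k - σ / (2 * C) * (k : ℝ) ^ 2) * μ k)) t
      ≤ ENNReal.ofReal (1 + η) := tsum_V_le _ htiltsum
  obtain ⟨N₁, hN₁⟩ := ZE_lower hpos hμsum hprob hmsum hr hr0 hr1 hmgf hμ0
    (by positivity : (0:ℝ) < σ / 8)
  obtain ⟨N₂, hN₂⟩ := exists_nat_ge ((σ / 2 + η) * (4 / σ))
  refine ⟨σ / 8, by positivity, max N₁ (N₂ + 1), fun n hn hZnpos => ?_⟩
  have hnN₁ : N₁ ≤ n := le_trans (le_max_left _ _) hn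
  have hnN₂ : N₂ + 1 ≤ n := le_trans (le_max_right _ _) hn
  -- relate Zn to ZE
  have hVne : ∀ t : PlaneTree, V (fun k => ENNReal.ofReal (μ k)) t ≠ ⊤ := by
    intro t
    refine (lt_of_le_of_lt (le_trans (ENNReal.le_tsum t) ?_) ENNReal.one_lt_top).ne
    exact tsum_V_m_le_one hpos hμsum hprob
  have htw : ∀ t : PlaneTree, treeWeight μ t = (V (fun k => ENNReal.ofReal (μ k)) t).toReal := by
    intro t
    rw [← ofReal_treeWeight hpos t, ENNReal.toReal_ofReal (treeWeight_nonneg hpos t)]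
  have hZreal : Zn μ n = (ZE (fun k => ENNReal.ofReal (μ k)) n).toReal := by
    rw [ZE, ENNReal.tsum_toReal_eq
      (f := fun t : {t : PlaneTree // t.size = n} =>
        V (fun k => ENNReal.ofReal (μ k)) t.1) (fun t => hVne t.1)]
    exact tsum_congr fun t => htw t.1
  have hZEpos : 0 < ZE (fun k => ENNReal.ofReal (μ k)) n := by
    rcases eq_or_lt_of_le (show (0:ℝ≥0∞) ≤ ZE (fun k => ENNReal.ofReal (μ k)) n from zero_le) with h0 | h
    · exfalso
      rw [hZreal, ← h0] at hZnpos
      simp at hZnpos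
    · exact h
  -- numerator
  have hnum := num_bound hpos (C := C) (le_of_lt hτpos) htot n
  have hexpo : σ - σ / (2 * C) * C = σ / 2 := by
    field_simp
    ring
  rw [hexpo] at hnum
  have hnumeric : Real.exp (-(σ / 2) * ((n : ℝ) - 1)) * (1 + η)
      ≤ Real.exp (-(σ / 8) * n) * Real.exp (-(σ / 8) * n) := by
    have h1 : (1 : ℝ) + η ≤ Real.exp η := by
      have := Real.add_one_le_exp η
      linarith
    have hncast : ((N₂ : ℝ) + 1) ≤ (n : ℝ) := by exact_mod_cast hnN₂
    have h2 : (σ / 2 + η) * (4 / σ) ≤ (n : ℝ) := by linarith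
    have h3 : σ / 2 + η ≤ σ / 4 * (n : ℝ) := by
      have h4 := mul_le_mul_of_nonneg_left h2 (by positivity : (0:ℝ) ≤ σ / 4)
      calc σ / 2 + η = σ / 4 * ((σ / 2 + η) * (4 / σ)) := by field_simp
        _ ≤ σ / 4 * (n : ℝ) := h4
    calc Real.exp (-(σ / 2) * ((n : ℝ) - 1)) * (1 + η)
        ≤ Real.exp (-(σ / 2) * ((n : ℝ) - 1)) * Real.exp η := by
          refine mul_le_mul_of_nonneg_left h1 (Real.exp_nonneg _)
      _ = Real.exp (-(σ / 2) * ((n : ℝ) - 1) + η) := by rw [← Real.exp_add]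
      _ ≤ Real.exp (-(σ / 4) * n) := by
          apply Real.exp_le_exp.2
          nlinarith
      _ = Real.exp (-(σ / 8) * n) * Real.exp (-(σ / 8) * n) := by
          rw [← Real.exp_add]
          congr 1
          ring
  have hnum2 : (∑' t : {t : PlaneTree // t.size = n
        ∧ (t.sumDegSq : ℝ) < C * ((t.size : ℝ) - 1)},
        V (fun k => ENNReal.ofReal (μ k)) t.1)
      ≤ ENNReal.ofReal (Real.exp (-(σ / 8) * n)) * ZE (fun k => ENNReal.ofReal (μ k)) n := by
    calc (∑' t : {t : PlaneTree // t.size = n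
          ∧ (t.sumDegSq : ℝ) < C * ((t.size : ℝ) - 1)},
          V (fun k => ENNReal.ofReal (μ k)) t.1)
        ≤ ENNReal.ofReal (Real.exp (-(σ / 2) * ((n : ℝ) - 1))) * ENNReal.ofReal (1 + η) :=
          hnum
      _ = ENNReal.ofReal (Real.exp (-(σ / 2) * ((n : ℝ) - 1)) * (1 + η)) := by
          rw [ENNReal.ofReal_mul (Real.exp_nonneg _)]
      _ ≤ ENNReal.ofReal (Real.exp (-(σ / 8) * n) * Real.exp (-(σ / 8) * n)) :=
          ENNReal.ofReal_le_ofReal hnumeric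
      _ = ENNReal.ofReal (Real.exp (-(σ / 8) * n)) * ENNReal.ofReal (Real.exp (-(σ / 8) * n)) := by
          rw [ENNReal.ofReal_mul (Real.exp_nonneg _)]
      _ ≤ ENNReal.ofReal (Real.exp (-(σ / 8) * n)) * ZE (fun k => ENNReal.ofReal (μ k)) n :=
          mul_le_mul_right (hN₁ n hnN₁ hZEpos) _
  -- pass to the reals
  have hZEne : ZE (fun k => ENNReal.ofReal (μ k)) n ≠ ⊤ := ZE_ne_top hpos hμsum hprob n
  have hnumreal : (∑' t : {t : PlaneTree // t.size = n
        ∧ t ∈ {t : PlaneTree | (t.sumDegSq : ℝ) < C * ((t.size : ℝ) - 1)}},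
        treeWeight μ t.1)
      ≤ Real.exp (-(σ / 8) * n) * Zn μ n := by
    have h5 : (∑' t : {t : PlaneTree // t.size = n
          ∧ (t.sumDegSq : ℝ) < C * ((t.size : ℝ) - 1)},
          treeWeight μ t.1)
        = (∑' t : {t : PlaneTree // t.size = n
            ∧ (t.sumDegSq : ℝ) < C * ((t.size : ℝ) - 1)},
            V (fun k => ENNReal.ofReal (μ k)) t.1).toReal := by
      rw [ENNReal.tsum_toReal_eq
        (f := fun t : {t : PlaneTree // t.size = n
          ∧ (t.sumDegSq : ℝ) < C * ((t.size : ℝ) - 1)} =>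
          V (fun k => ENNReal.ofReal (μ k)) t.1) (fun t => hVne t.1)]
      exact tsum_congr fun t => htw t.1
    have h6 := ENNReal.toReal_mono
      (ENNReal.mul_ne_top ENNReal.ofReal_ne_top hZEne) hnum2
    rw [ENNReal.toReal_mul, ENNReal.toReal_ofReal (Real.exp_nonneg _)] at h6
    calc (∑' t : {t : PlaneTree // t.size = n
          ∧ t ∈ {t : PlaneTree | (t.sumDegSq : ℝ) < C * ((t.size : ℝ) - 1)}},
          treeWeight μ t.1)
        = (∑' t : {t : PlaneTree // t.size = n
            ∧ (t.sumDegSq : ℝ) < C * ((t.size : ℝ) - 1)},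
            V (fun k => ENNReal.ofReal (μ k)) t.1).toReal := h5
      _ ≤ Real.exp (-(σ / 8) * n) * (ZE (fun k => ENNReal.ofReal (μ k)) n).toReal := h6
      _ = Real.exp (-(σ / 8) * n) * Zn μ n := by rw [hZreal]
  unfold sgProb
  rw [div_le_iff₀ hZnpos]
  exact hnumreal
end

section
/- Let w = (w_k, k ≥ 0) be a weight sequence with w_0 > 0 and w_k > 0 for some k ≥ 2, and suppose the radius of convergence ρ of Φ(z) = Σ_{k≥0} w_k·z^k equals 0. Whenever Z_n(w) > 0, let 𝒯_n be a simply generated tree with weight sequence w and size n. Then for every ε > 0, P(n_{𝒯_n}(0)/n < 1 − ε) = oe(1); that is, with very high probability 𝒯_n has at least (1−ε)n leaves. -/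
open scoped ENNReal NNReal BigOperators
open MeasureTheory ProbabilityTheory

/-- `Φ_w(t) = Σ_k w_k t^k`, valued in `ℝ≥0∞`. -/
noncomputable def sgPhi (w : ℕ → ℝ) (t : ℝ) : ℝ≥0∞ :=
  ∑' k : ℕ, ENNReal.ofReal (w k * t ^ k)

/-- The radius of convergence `ρ` of `Φ_w` (for a non-negative weight sequence). -/
noncomputable def sgRho (w : ℕ → ℝ) : ℝ≥0∞ :=
  ⨆ (t : ℝ≥0) (_ : sgPhi w t < ⊤), (t : ℝ≥0∞)

/-- `Ψ_w(t) = t Φ_w'(t) / Φ_w(t) = (Σ_k k w_k t^k) / (Σ_k w_k t^k)`, valued in `ℝ≥0∞`. -/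
noncomputable def sgPsi (w : ℕ → ℝ) (t : ℝ) : ℝ≥0∞ :=
  (∑' k : ℕ, ENNReal.ofReal (k * w k * t ^ k)) / sgPhi w t

/-- `ν = Ψ_w(ρ) = lim_{t ↑ ρ} Ψ_w(t)`, which (as `Ψ_w` is non-decreasing on `[0,ρ)`)
equals the supremum of `Ψ_w(t)` over `t < ρ`; it equals `0` when `ρ = 0`. -/
noncomputable def sgNu (w : ℕ → ℝ) : ℝ≥0∞ :=
  ⨆ (t : ℝ≥0) (_ : (t : ℝ≥0∞) < sgRho w), sgPsi w (t : ℝ)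

/-- `σ² = ρ Ψ_w'(ρ)`: when `ν ≤ 1` this is the variance
`(Σ_k k² w_k ρ^k)/Φ_w(ρ) − ν²` of the probability distribution `π(k) = w_k ρ^k / Φ_w(ρ)`. -/
noncomputable def sgSigmaSq (w : ℕ → ℝ) : ℝ≥0∞ :=
  (∑' k : ℕ, ENNReal.ofReal ((k : ℝ) ^ 2 * w k * (sgRho w).toReal ^ k)) /
      sgPhi w (sgRho w).toReal - (sgNu w) ^ 2


namespace PlaneTree

lemma size_node (l : List PlaneTree) : (node l).size = 1 + (l.map size).sum := by
  rw [size, List.attach_map_val]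

lemma degCount_node (l : List PlaneTree) (c : ℕ) :
    (node l).degCount c = (if l.length = c then 1 else 0) + (l.map (degCount · c)).sum := by
  rw [degCount]
  congr 1
  exact congrArg List.sum (List.attach_map_val (l := l) (f := fun s => degCount s c))

/-- strong induction -/
lemma strongInd (P : PlaneTree → Prop)
    (h : ∀ l : List PlaneTree, (∀ s ∈ l, P s) → P (node l)) : ∀ t, P t := by
  have H : ∀ N t, sizeOf t ≤ N → P t := by
    intro N
    induction N with
    | zero => intro t ht; obtain ⟨l⟩ := t; simp only [node.sizeOf_spec] at ht; omega
    | succ N ih =>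
      intro t ht
      obtain ⟨l⟩ := t
      refine h l fun s hs => ih s ?_
      have := List.sizeOf_lt_of_mem hs
      simp only [node.sizeOf_spec] at ht
      omega
  exact fun t => H (sizeOf t) t le_rfl

lemma one_le_size (t : PlaneTree) : 1 ≤ t.size := by
  obtain ⟨l⟩ := t
  rw [size_node]; omega

lemma size_node' (l : List PlaneTree) : (node l).size = 1 + (l.map size).sum := size_node l

lemma length_le_sum_sizes (l : List PlaneTree) : l.length ≤ (l.map size).sum := by
  induction l with
  | nil => simp
  | cons a l ih => simp only [List.map_cons, List.sum_cons, List.length_cons]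
                   have := one_le_size a; omega

lemma size_mem_le (l : List PlaneTree) {s : PlaneTree} (hs : s ∈ l) :
    s.size ≤ (l.map size).sum := by
  induction l with
  | nil => simp at hs
  | cons a l ih =>
    simp only [List.map_cons, List.sum_cons]
    rcases List.mem_cons.1 hs with h | h
    · subst h; omega
    · have := ih h; omega

lemma degCount_eq_zero (t : PlaneTree) : ∀ c, t.size ≤ c → t.degCount c = 0 := by
  induction t using strongInd with
  | h l ih =>
    intro c hc
    rw [size_node] at hc
    rw [degCount_node]
    have h1 : l.length ≠ c := by have := length_le_sum_sizes l; omega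
    simp only [h1, if_false, zero_add]
    rw [List.sum_eq_zero]
    intro x hx
    simp only [List.mem_map] at hx
    obtain ⟨s, hs, rfl⟩ := hx
    exact ih s hs c (by have := size_mem_le l hs; omega)

section helpers
variable {α : Type*} {M : Type*}

lemma list_sum_swap [AddCommMonoid M] (L : List α) (F : Finset ℕ) (f : ℕ → α → M) :
    ∑ c ∈ F, (L.map (f c)).sum = (L.map fun x => ∑ c ∈ F, f c x).sum := by
  induction L with
  | nil => simp
  | cons a L ih => simp [Finset.sum_add_distrib, ih]

lemma list_prod_swap [CommMonoid M] (L : List α) (F : Finset ℕ) (f : ℕ → α → M) :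
    ∏ c ∈ F, (L.map (f c)).prod = (L.map fun x => ∏ c ∈ F, f c x).prod := by
  induction L with
  | nil => simp
  | cons a L ih => simp [Finset.prod_mul_distrib, ih]

lemma list_pow_sum [CommMonoid M] (L : List α) (f : α → ℕ) (a : M) :
    a ^ (L.map f).sum = (L.map fun x => a ^ f x).prod := by
  induction L with
  | nil => simp
  | cons b L ih => simp [pow_add, ih]

lemma list_sum_add (L : List α) (f g : α → ℕ) :
    (L.map fun x => f x + g x).sum = (L.map f).sum + (L.map g).sum := by
  induction L with
  | nil => simp
  | cons a L ih => simp [ih]; omega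
end helpers

lemma sum_degCount (t : PlaneTree) : ∀ N, t.size ≤ N →
    ∑ c ∈ Finset.range N, t.degCount c = t.size := by
  induction t using strongInd with
  | h l ih =>
    intro N hN
    rw [size_node] at hN ⊢
    simp only [degCount_node, Finset.sum_add_distrib]
    have h1 : ∑ c ∈ Finset.range N, (if l.length = c then 1 else 0) = 1 := by
      have hmem : l.length ∈ Finset.range N := by
        simp only [Finset.mem_range]
        have := length_le_sum_sizes l; omega
      simp only [Finset.sum_ite_eq, hmem, if_true]
    rw [h1, list_sum_swap]
    congr 1
    apply congrArg List.sum
    apply List.map_congr_left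
    intro s hs
    exact ih s hs N (by have := size_mem_le l hs; omega)

lemma sum_mul_degCount (t : PlaneTree) : ∀ N, t.size ≤ N →
    (∑ c ∈ Finset.range N, c * t.degCount c) + 1 = t.size := by
  induction t using strongInd with
  | h l ih =>
    intro N hN
    rw [size_node] at hN ⊢
    simp only [degCount_node, Nat.mul_add, Finset.sum_add_distrib]
    have h1 : ∑ c ∈ Finset.range N, c * (if l.length = c then 1 else 0) = l.length := by
      have hmem : l.length ∈ Finset.range N := by
        simp only [Finset.mem_range]
        have := length_le_sum_sizes l; omega
      rw [Finset.sum_congr rfl (fun c _ => by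
        show c * (if l.length = c then 1 else 0) = if l.length = c then c else 0
        split <;> simp_all)]
      simp only [Finset.sum_ite_eq, hmem, if_true]
    rw [h1]
    have h2 : ∑ c ∈ Finset.range N, c * (l.map (degCount · c)).sum
        = (l.map fun s => ∑ c ∈ Finset.range N, c * degCount s c).sum := by
      rw [← list_sum_swap]
      congr 1
      funext c
      rw [← List.sum_map_mul_left]
    rw [h2]
    have h3 : (l.map size).sum
        = (l.map fun s => (∑ c ∈ Finset.range N, c * degCount s c) + 1).sum := by
      apply congrArg List.sum
      apply List.map_congr_left
      intro s hs
      exact (ih s hs N (by have := size_mem_le l hs; omega)).symm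
    rw [h3, list_sum_add]
    simp [List.map_const]
    omega


end PlaneTree

lemma treeWeight_node (w : ℕ → ℝ) (l : List PlaneTree) :
    treeWeight w (.node l) = w l.length * (l.map (treeWeight w)).prod := by
  rw [treeWeight]
  congr 1
  exact congrArg List.prod (List.attach_map_val (l := l) (f := fun s => treeWeight w s))

open PlaneTree in
lemma treeWeight_eq_prod (w : ℕ → ℝ) (t : PlaneTree) : ∀ N, t.size ≤ N →
    treeWeight w t = ∏ c ∈ Finset.range N, w c ^ t.degCount c := by
  induction t using PlaneTree.strongInd with
  | h l ih =>
    intro N hN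
    rw [size_node] at hN
    rw [treeWeight_node]
    simp only [degCount_node, pow_add]
    rw [Finset.prod_mul_distrib]
    have h1 : ∏ c ∈ Finset.range N, w c ^ (if l.length = c then 1 else 0) = w l.length := by
      have hmem : l.length ∈ Finset.range N := by
        simp only [Finset.mem_range]
        have := length_le_sum_sizes l; omega
      rw [Finset.prod_congr rfl (fun c _ => by
        show w c ^ (if l.length = c then 1 else 0) = if l.length = c then w c else 1
        split <;> simp)]
      simp only [Finset.prod_ite_eq, hmem, if_true]
    rw [h1]
    congr 1
    have h2 : ∏ c ∈ Finset.range N, w c ^ (l.map (degCount · c)).sum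
        = (l.map fun s => ∏ c ∈ Finset.range N, w c ^ degCount s c).prod := by
      rw [← list_prod_swap]
      exact Finset.prod_congr rfl fun c _ => list_pow_sum l (degCount · c) (w c)
    rw [h2]
    apply congrArg List.prod
    apply List.map_congr_left
    intro s hs
    exact ih s hs N (by have := size_mem_le l hs; omega)

lemma treeWeight_nonneg {w : ℕ → ℝ} (hw : ∀ k, 0 ≤ w k) (t : PlaneTree) :
    0 ≤ treeWeight w t := by
  rw [treeWeight_eq_prod w t t.size le_rfl]
  exact Finset.prod_nonneg fun c _ => pow_nonneg (hw c) _

namespace PlaneTree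

def enc : PlaneTree → List Bool
  | node l => true :: ((l.attach.map fun c => enc c.1).flatten ++ [false])
decreasing_by
  simp only [node.sizeOf_spec]
  have := List.sizeOf_lt_of_mem c.2
  omega

lemma enc_node (l : List PlaneTree) :
    enc (node l) = true :: ((l.map enc).flatten ++ [false]) := by
  rw [enc]
  congr 2
  exact congrArg List.flatten (List.attach_map_val (l := l) (f := enc))

lemma enc_prefix : ∀ N (t₁ : PlaneTree), sizeOf t₁ ≤ N → ∀ (t₂ : PlaneTree) (r₁ r₂ : List Bool),
    enc t₁ ++ r₁ = enc t₂ ++ r₂ → t₁ = t₂ ∧ r₁ = r₂ := by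
  intro N
  induction N with
  | zero => intro t ht; obtain ⟨l⟩ := t; simp only [node.sizeOf_spec] at ht; omega
  | succ N ih =>
    intro t₁ ht t₂ r₁ r₂ heq
    obtain ⟨l₁⟩ := t₁
    obtain ⟨l₂⟩ := t₂
    have hl : ∀ s ∈ l₁, sizeOf s ≤ N := by
      intro s hs
      have := List.sizeOf_lt_of_mem hs
      simp only [node.sizeOf_spec] at ht
      omega
    rw [enc_node, enc_node] at heq
    simp only [List.cons_append, List.cons.injEq, true_and, List.append_assoc,
      List.singleton_append] at heq
    suffices h : l₁ = l₂ ∧ r₁ = r₂ by exact ⟨by rw [h.1], h.2⟩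
    clear ht
    induction l₁ generalizing l₂ r₁ r₂ with
    | nil =>
      cases l₂ with
      | nil => simpa using heq
      | cons s₂ l₂ =>
        exfalso
        obtain ⟨m₂⟩ := s₂
        rw [List.map_cons, List.flatten_cons, enc_node] at heq
        simp at heq
    | cons s₁ l₁ ihl =>
      cases l₂ with
      | nil =>
        exfalso
        obtain ⟨m₁⟩ := s₁
        rw [List.map_cons, List.flatten_cons, enc_node] at heq
        simp at heq
      | cons s₂ l₂ =>
        rw [List.map_cons, List.flatten_cons, List.map_cons, List.flatten_cons,
          List.append_assoc, List.append_assoc] at heq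
        obtain ⟨hs, htail⟩ := ih s₁ (hl s₁ (by simp)) s₂ _ _ heq
        have := ihl r₁ r₂ l₂ (fun s hs => hl s (List.mem_cons_of_mem _ hs)) htail
        exact ⟨by rw [hs, this.1], this.2⟩

lemma enc_injective : Function.Injective enc := by
  intro t₁ t₂ h
  have := enc_prefix (sizeOf t₁) t₁ le_rfl t₂ (List.nil) (List.nil) (by simpa using h)
  exact this.1

lemma enc_length (t : PlaneTree) : (enc t).length = 2 * t.size := by
  induction t using strongInd with
  | h l ih =>
    rw [enc_node, size_node]
    simp only [List.length_cons, List.length_append, List.length_flatten, List.length_singleton]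
    rw [List.map_map]
    have : (l.map (List.length ∘ enc)).sum = (l.map fun s => 2 * s.size).sum := by
      apply congrArg List.sum
      apply List.map_congr_left
      intro s hs
      exact ih s hs
    rw [this, List.sum_map_mul_left]
    simp only [List.length_nil]
    omega

end PlaneTree

namespace PlaneTree

def cat : List ℕ → PlaneTree
  | [] => .node []
  | d :: L => .node (cat L :: List.replicate (d - 1) (.node []))

lemma size_cat (L : List ℕ) (hL : ∀ x ∈ L, 1 ≤ x) : (cat L).size = 1 + L.sum := by
  induction L with
  | nil => simp [cat, size_node]
  | cons d L ih =>
    have hd : 1 ≤ d := hL d (by simp)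
    rw [cat, size_node]
    simp only [List.map_cons, List.sum_cons, List.map_replicate, List.sum_replicate]
    rw [ih (fun x hx => hL x (by simp [hx]))]
    have : (PlaneTree.node []).size = 1 := by rw [size_node]; simp
    rw [this]
    simp only [smul_eq_mul, mul_one]
    omega

lemma weight_cat (w : ℕ → ℝ) (L : List ℕ) (hL : ∀ x ∈ L, 1 ≤ x) :
    treeWeight w (cat L) * w 0 ^ L.length = w 0 ^ (1 + L.sum) * (L.map w).prod := by
  induction L with
  | nil => simp [cat, treeWeight_node]
  | cons d L ih =>
    have hd : 1 ≤ d := hL d (by simp)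
    rw [cat, treeWeight_node]
    simp only [List.map_cons, List.prod_cons, List.map_replicate, List.prod_replicate,
      List.length_cons, List.length_replicate, List.sum_cons]
    have hlen : d - 1 + 1 = d := by omega
    rw [hlen]
    have hleaf : treeWeight w (PlaneTree.node []) = w 0 := by
      rw [treeWeight_node]; simp
    rw [hleaf]
    have ihx := ih (fun x hx => hL x (by simp [hx]))
    have expand : w d * (treeWeight w (cat L) * w 0 ^ (d - 1)) * w 0 ^ (L.length + 1)
        = (w d * w 0 ^ ((d - 1) + 1)) * (treeWeight w (cat L) * w 0 ^ L.length) := by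
      rw [pow_add, pow_add]; ring
    rw [expand, ihx]
    have : (d - 1) + 1 = d := by omega
    rw [this]
    have : 1 + (d + L.sum) = d + (1 + L.sum) := by omega
    rw [this, pow_add]
    ring

def mkList (Nb : ℕ) (f : ℕ → ℕ) : List ℕ :=
  (List.range Nb).flatMap fun c => if c = 0 then [] else List.replicate (f c) c

lemma mkList_succ (Nb : ℕ) (f : ℕ → ℕ) :
    mkList (Nb + 1) f = mkList Nb f ++ (if Nb = 0 then [] else List.replicate (f Nb) Nb) := by
  rw [mkList, List.range_succ, List.flatMap_append]
  simp [mkList]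

lemma mkList_mem (Nb : ℕ) (f : ℕ → ℕ) : ∀ x ∈ mkList Nb f, 1 ≤ x := by
  intro x hx
  rw [mkList, List.mem_flatMap] at hx
  obtain ⟨c, _, hc⟩ := hx
  by_cases h : c = 0
  · simp [h] at hc
  · simp [h] at hc
    omega

lemma mkList_sum (Nb : ℕ) (f : ℕ → ℕ) :
    (mkList Nb f).sum = ∑ c ∈ Finset.range Nb, c * f c := by
  induction Nb with
  | zero => simp [mkList]
  | succ Nb ih =>
    rw [mkList_succ, List.sum_append, ih, Finset.sum_range_succ]
    by_cases h : Nb = 0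
    · simp [h]
    · simp only [h, if_false, List.sum_replicate, smul_eq_mul, Nat.mul_comm]

lemma mkList_length (Nb : ℕ) (f : ℕ → ℕ) :
    (mkList Nb f).length = ∑ c ∈ Finset.range Nb, if c = 0 then 0 else f c := by
  induction Nb with
  | zero => simp [mkList]
  | succ Nb ih =>
    rw [mkList_succ, List.length_append, ih, Finset.sum_range_succ]
    by_cases h : Nb = 0 <;> simp [h]

lemma mkList_prod (w : ℕ → ℝ) (Nb : ℕ) (f : ℕ → ℕ) :
    ((mkList Nb f).map w).prod = ∏ c ∈ Finset.range Nb, if c = 0 then 1 else w c ^ f c := by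
  induction Nb with
  | zero => simp [mkList]
  | succ Nb ih =>
    rw [mkList_succ, List.map_append, List.prod_append, ih, Finset.prod_range_succ]
    by_cases h : Nb = 0 <;> simp [h]

end PlaneTree

open scoped ENNReal NNReal

noncomputable def sizeFintype (n : ℕ) : Fintype {t : PlaneTree // t.size = n} :=
  Fintype.ofInjective (β := List.Vector Bool (2*n))
    (fun t => (⟨PlaneTree.enc t.1, by rw [PlaneTree.enc_length, t.2]⟩ : List.Vector Bool (2*n)))
    (fun a b h => by
      apply Subtype.ext
      apply PlaneTree.enc_injective
      exact congrArg Subtype.val h)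

noncomputable def sizePFintype (n : ℕ) (P : PlaneTree → Prop) :
    Fintype {t : PlaneTree // t.size = n ∧ P t} :=
  Fintype.ofInjective (β := List.Vector Bool (2*n))
    (fun t => (⟨PlaneTree.enc t.1, by rw [PlaneTree.enc_length, t.2.1]⟩ : List.Vector Bool (2*n)))
    (fun a b h => by
      apply Subtype.ext
      apply PlaneTree.enc_injective
      exact congrArg Subtype.val h)

lemma sizePFintype_card (n : ℕ) (P : PlaneTree → Prop) :
    @Fintype.card _ (sizePFintype n P) ≤ 2 ^ (2 * n) := by
  have := @Fintype.card_le_of_injective _ (List.Vector Bool (2*n)) (sizePFintype n P) _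
    (fun t => (⟨PlaneTree.enc t.1, by rw [PlaneTree.enc_length, t.2.1]⟩ : List.Vector Bool (2*n)))
    (fun a b h => by
      apply Subtype.ext
      apply PlaneTree.enc_injective
      exact congrArg Subtype.val h)
  rwa [card_vector, Fintype.card_bool] at this

lemma Zn_ge (w : ℕ → ℝ) (hpos : ∀ k, 0 ≤ w k) (n : ℕ) (t0 : PlaneTree) (h : t0.size = n) :
    treeWeight w t0 ≤ Zn w n := by
  rw [Zn]
  haveI := sizeFintype n
  rw [tsum_fintype]
  exact Finset.single_le_sum (f := fun t : {t : PlaneTree // t.size = n} => treeWeight w t.1)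
    (fun i _ => treeWeight_nonneg hpos i.1) (Finset.mem_univ ⟨t0, h⟩)

lemma exists_good (w : ℕ → ℝ) (hpos : ∀ k, 0 ≤ w k) (hrho : sgRho w = 0)
    (M : ℝ) (hM : 1 ≤ M) (K0 : ℕ) : ∃ K, K0 ≤ K ∧ M ^ K ≤ w K := by
  by_contra hcon
  push_neg at hcon
  have hM0 : 0 < M := lt_of_lt_of_le one_pos hM
  set t0r : ℝ := 1 / (2 * M) with ht0r_def
  have ht0r : 0 < t0r := by positivity
  set C : ℝ := 1 + ∑ k ∈ Finset.range K0, w k * t0r ^ k * 2 ^ k with hC_def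
  have hC1 : 1 ≤ C := by
    have : 0 ≤ ∑ k ∈ Finset.range K0, w k * t0r ^ k * 2 ^ k :=
      Finset.sum_nonneg fun k _ => by have := hpos k; positivity
    simp [hC_def]; linarith
  have hbound : ∀ k, w k * t0r ^ k ≤ C * (1 / 2) ^ k := by
    intro k
    by_cases hk : k < K0
    · have hterm : w k * t0r ^ k * 2 ^ k ≤ C - 1 := by
        rw [hC_def]
        have := Finset.single_le_sum (f := fun k => w k * t0r ^ k * 2 ^ k)
          (fun i _ => by have := hpos i; positivity) (Finset.mem_range.2 hk)
        simp only [add_sub_cancel_left]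
        exact this
      have hpow : ((2:ℝ))^k * (1/2)^k = 1 := by rw [← mul_pow]; norm_num
      have key : w k * t0r ^ k = (w k * t0r ^ k * 2 ^ k) * (1/2) ^ k := by
        rw [mul_assoc, mul_assoc, hpow]
        ring
      rw [key]
      exact mul_le_mul_of_nonneg_right (by linarith) (by positivity)
    · push_neg at hk
      have hwk := hcon k hk
      have : w k * t0r ^ k < M ^ k * t0r ^ k := by
        apply mul_lt_mul_of_pos_right hwk (by positivity)
      have heq : M ^ k * t0r ^ k = (1/2) ^ k := by
        rw [← mul_pow, ht0r_def]
        congr 1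
        field_simp
      calc w k * t0r ^ k ≤ M ^ k * t0r ^ k := le_of_lt this
        _ = (1/2)^k := heq
        _ ≤ C * (1/2)^k := le_mul_of_one_le_left (by positivity) hC1
  have hphi : sgPhi w t0r < ⊤ := by
    unfold sgPhi
    have hle : ∀ k, ENNReal.ofReal (w k * t0r ^ k)
        ≤ ENNReal.ofReal C * (ENNReal.ofReal (1/2)) ^ k := by
      intro k
      rw [← ENNReal.ofReal_pow (by norm_num), ← ENNReal.ofReal_mul (by linarith)]
      exact ENNReal.ofReal_le_ofReal (hbound k)
    calc ∑' k, ENNReal.ofReal (w k * t0r ^ k)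
        ≤ ∑' k, ENNReal.ofReal C * (ENNReal.ofReal (1/2)) ^ k := ENNReal.tsum_le_tsum hle
      _ = ENNReal.ofReal C * ∑' k, (ENNReal.ofReal (1/2)) ^ k := ENNReal.tsum_mul_left
      _ = ENNReal.ofReal C * (1 - ENNReal.ofReal (1/2))⁻¹ := by rw [ENNReal.tsum_geometric]
      _ < ⊤ := by
          apply ENNReal.mul_lt_top ENNReal.ofReal_lt_top
          rw [ENNReal.inv_lt_top]
          apply tsub_pos_of_lt
          exact ENNReal.ofReal_lt_one.2 (by norm_num)
  set t0n : ℝ≥0 := ⟨t0r, le_of_lt ht0r⟩ with ht0n_def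
  have ht0 : t0n ≠ 0 := by
    intro h
    rw [← NNReal.coe_eq_zero] at h
    rw [ht0n_def] at h
    change t0r = 0 at h
    linarith
  have hlift : (t0n : ℝ≥0∞) ≤ sgRho w := by
    unfold sgRho
    refine le_iSup₂_of_le t0n ?_ le_rfl
    have : (t0n : ℝ) = t0r := rfl
    rwa [this]
  rw [hrho, le_zero_iff, ENNReal.coe_eq_zero] at hlift
  exact ht0 hlift

open PlaneTree in
lemma key_lemma (w : ℕ → ℝ) (hpos : ∀ k, 0 ≤ w k) (hw0 : 0 < w 0)
    (ε Q W β : ℝ) (hε : 0 < ε) (hQ1 : 1 ≤ Q) (hW1 : 1 ≤ W)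
    (hβpos : 0 < β) (hβ1 : β ≤ 1) (hβ0 : β ≤ w 0)
    (C J K : ℕ) (hC1 : 1 ≤ C) (hCε : 2/ε ≤ (C:ℝ)) (hWc : ∀ c ≤ C, w c ≤ W)
    (hJ : 4*(C:ℝ)/ε ≤ (J:ℝ)) (hKC : C + 1 ≤ K) (hwK : (Q^J * W / β) ^ K ≤ w K)
    (n : ℕ) (hnN : 4*(C:ℝ)*(K:ℝ) ≤ ε*(n:ℝ))
    (t : PlaneTree) (hsize : t.size = n) (hbad : ((t.degCount 0 : ℝ)) < (1-ε)*(n:ℝ)) :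
    Q^n * treeWeight w t ≤ Zn w n := by
  set M : ℝ := Q^J * W / β with hM_def
  have hQ0 : (0:ℝ) < Q := lt_of_lt_of_le one_pos hQ1
  have hQJ1 : 1 ≤ Q^J := by
    calc (1:ℝ) = 1^J := (one_pow J).symm
    _ ≤ Q^J := pow_le_pow_left₀ (by norm_num) hQ1 J
  have hM1 : 1 ≤ M := by
    rw [hM_def, le_div_iff₀ hβpos]
    nlinarith
  have hM0 : 0 < M := lt_of_lt_of_le one_pos hM1
  have hK0 : 0 < K := by omega
  have hCpos : (0:ℝ) < C := by exact_mod_cast hC1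
  set Nb : ℕ := n + K + 1 with hNb_def
  set m : ℕ → ℕ := t.degCount with hm_def
  have hsle : t.size ≤ Nb := by omega
  have F1 : ∑ c ∈ Finset.range Nb, m c = n := by
    rw [hm_def, sum_degCount t Nb hsle, hsize]
  have F2 : (∑ c ∈ Finset.range Nb, c * m c) + 1 = n := by
    rw [hm_def, sum_mul_degCount t Nb hsle, hsize]
  have hn1 : 1 ≤ n := by rw [← hsize]; exact one_le_size t
  -- split the vertex count
  set T : ℕ := ∑ c ∈ Finset.Icc 1 C, m c with hT_def
  set U : ℕ := ∑ c ∈ Finset.Ico (C+1) Nb, m c with hU_def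
  have hCNb : C + 1 ≤ Nb := by omega
  have hsplit : m 0 + T + U = n := by
    have e1 : (∑ c ∈ Finset.Ico 0 (C+1), m c) + ∑ c ∈ Finset.Ico (C+1) Nb, m c
        = ∑ c ∈ Finset.Ico 0 Nb, m c := Finset.sum_Ico_consecutive m (by omega) hCNb
    have e2 : (∑ c ∈ Finset.Ico 0 1, m c) + ∑ c ∈ Finset.Ico 1 (C+1), m c
        = ∑ c ∈ Finset.Ico 0 (C+1), m c := Finset.sum_Ico_consecutive m (by omega) (by omega)
    have e3 : ∑ c ∈ Finset.Ico 0 1, m c = m 0 := by simp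
    have e4 : ∑ c ∈ Finset.Ico 1 (C+1), m c = T := by
      rw [hT_def, Finset.Ico_add_one_right_eq_Icc]
    have e5 : ∑ c ∈ Finset.Ico 0 Nb, m c = n := by rw [← Finset.range_eq_Ico]; exact F1
    rw [hU_def]
    omega
  -- bound on U
  have hCU : C * U ≤ n := by
    have h1 : C * U = ∑ c ∈ Finset.Ico (C+1) Nb, C * m c := by rw [hU_def, Finset.mul_sum]
    have h2 : ∑ c ∈ Finset.Ico (C+1) Nb, C * m c ≤ ∑ c ∈ Finset.Ico (C+1) Nb, c * m c := by
      apply Finset.sum_le_sum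
      intro c hc
      have := (Finset.mem_Ico.1 hc).1
      exact Nat.mul_le_mul_right _ (by omega)
    have h3 : ∑ c ∈ Finset.Ico (C+1) Nb, c * m c ≤ ∑ c ∈ Finset.range Nb, c * m c := by
      apply Finset.sum_le_sum_of_subset
      rw [Finset.range_eq_Ico]
      exact Finset.Ico_subset_Ico (by omega) le_rfl
    calc C * U = ∑ c ∈ Finset.Ico (C+1) Nb, C * m c := h1
    _ ≤ ∑ c ∈ Finset.Ico (C+1) Nb, c * m c := h2
    _ ≤ ∑ c ∈ Finset.range Nb, c * m c := h3
    _ ≤ n := by omega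
  -- real bound: T is large
  have hTreal : ε * n ≤ 2 * (T:ℝ) := by
    have hcast : (m 0 : ℝ) + T + U = n := by exact_mod_cast hsplit
    have hUC : (C:ℝ) * U ≤ n := by exact_mod_cast hCU
    have hU0 : (0:ℝ) ≤ U := Nat.cast_nonneg U
    have hεC : 2 ≤ ε * C := by
      rw [div_le_iff₀ hε] at hCε
      linarith [mul_comm (C:ℝ) ε]
    have h2U : 2 * (U:ℝ) ≤ ε * n := by
      have k1 : 2*(U:ℝ) ≤ (ε*C)*U := mul_le_mul_of_nonneg_right hεC hU0
      have k2 : (ε*(C:ℝ))*U = ε*((C:ℝ)*U) := by ring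
      have k3 : ε*((C:ℝ)*U) ≤ ε*n := mul_le_mul_of_nonneg_left hUC hε.le
      linarith
    linarith
  -- pigeonhole
  obtain ⟨d, hdmem, hdT⟩ : ∃ d ∈ Finset.Icc 1 C, T ≤ C * m d := by
    have hne : (Finset.Icc 1 C).Nonempty := ⟨1, by simp [hC1]⟩
    have hsum : (∑ _d ∈ Finset.Icc 1 C, T) ≤ ∑ d ∈ Finset.Icc 1 C, C * m d := by
      rw [Finset.sum_const, Nat.card_Icc, Nat.add_sub_cancel, ← Finset.mul_sum, smul_eq_mul,
        ← hT_def]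
    exact Finset.exists_le_of_sum_le hne hsum
  have hd1 : 1 ≤ d := (Finset.mem_Icc.1 hdmem).1
  have hdC : d ≤ C := (Finset.mem_Icc.1 hdmem).2
  have hdK : d < K := by omega
  set r : ℕ := m d / K with hr_def
  have hrK_le : r * K ≤ m d := by rw [hr_def]; exact Nat.div_mul_le_self _ _
  have hrK_gt : m d < r * K + K := by
    have hdm := Nat.div_add_mod (m d) K
    rw [← hr_def, mul_comm K r] at hdm
    have hmod := Nat.mod_lt (m d) hK0
    omega
  -- real: εn ≤ 4C(rK)
  have hmd : ε * n ≤ 2 * (C:ℝ) * (m d) := by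
    have : (T:ℝ) ≤ (C:ℝ) * (m d) := by exact_mod_cast hdT
    linarith
  have hπ : ε * (n:ℝ) ≤ 4*(C:ℝ)*((r*K : ℕ):ℝ) := by
    have h1 : ((m d : ℕ):ℝ) ≤ ((r*K : ℕ):ℝ) + K := by
      have : m d ≤ r*K + K := le_of_lt hrK_gt
      exact_mod_cast this
    have h2 : 2*(C:ℝ) * (m d) ≤ 2*(C:ℝ)*(((r*K:ℕ):ℝ) + K) :=
      mul_le_mul_of_nonneg_left h1 (by positivity)
    have h3 : (0:ℝ) ≤ ((r*K:ℕ):ℝ) := Nat.cast_nonneg _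
    have h4 : 2*(C:ℝ)*(((r*K:ℕ):ℝ) + K) = 2*(C:ℝ)*((r*K:ℕ):ℝ) + 2*(C:ℝ)*K := by ring
    linarith
  have hnJrK : n ≤ J * (r * K) := by
    have hJ4C : 4*(C:ℝ) ≤ ε * J := by
      rw [div_le_iff₀ hε] at hJ
      linarith [mul_comm (J:ℝ) ε]
    have hrK0 : (0:ℝ) ≤ ((r*K:ℕ):ℝ) := Nat.cast_nonneg _
    have h5 : ε * (n:ℝ) ≤ ε * ((J:ℝ) * ((r*K:ℕ):ℝ)) := by
      have := mul_le_mul_of_nonneg_right hJ4C hrK0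
      nlinarith [this]
    have hreal : (n:ℝ) ≤ (J:ℝ) * ((r*K:ℕ):ℝ) := le_of_mul_le_mul_left (by linarith) hε
    exact_mod_cast hreal
  -- memberships
  have hdNb : d ∈ Finset.range Nb := Finset.mem_range.2 (by omega)
  have hKNb : K ∈ Finset.range Nb := Finset.mem_range.2 (by omega)
  have h0Nb : 0 ∈ Finset.range Nb := Finset.mem_range.2 (by omega)
  have hd0 : d ≠ 0 := by omega
  have hK0' : K ≠ 0 := by omega
  have hKd : K ≠ d := by omega
  -- surgery
  set m'' : ℕ → ℕ := fun c => if c = d then m d - r*K else m c with hm''_def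
  set g : ℕ → ℕ := fun c => if c = K then r*d else if c = 0 then r*(K-d) else 0 with hg_def
  set m' : ℕ → ℕ := fun c => m'' c + g c with hm'_def
  have hm_eq : ∀ c, m c = m'' c + (if c = d then r*K else 0) := by
    intro c
    simp only [hm''_def]
    by_cases h : c = d
    · subst h; simp; omega
    · simp [h]
  set P : ℝ := ∏ c ∈ Finset.range Nb, w c ^ m'' c with hP_def
  have hP0 : 0 ≤ P := Finset.prod_nonneg fun c _ => pow_nonneg (hpos c) _
  -- A: weight of t
  have hA : treeWeight w t = P * w d ^ (r*K) := by
    rw [treeWeight_eq_prod w t Nb hsle, ← hm_def]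
    have step1 : ∀ c ∈ Finset.range Nb,
        w c ^ m c = w c ^ m'' c * w c ^ (if c = d then r*K else 0) := by
      intro c _
      rw [← pow_add, ← hm_eq c]
    rw [Finset.prod_congr rfl step1, Finset.prod_mul_distrib, hP_def]
    congr 1
    have step2 : ∀ c ∈ Finset.range Nb, w c ^ (if c = d then r*K else 0)
        = (if c = d then w d ^ (r*K) else 1) := by
      intro c _
      by_cases h : c = d
      · subst h; simp
      · simp [h]
    rw [Finset.prod_congr rfl step2,
      Finset.prod_ite_eq' (Finset.range Nb) d fun _ => w d ^ (r*K), if_pos hdNb]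
  -- sums over g and h
  have hgsum : ∑ c ∈ Finset.range Nb, c * g c = K * (r*d) := by
    have step : ∀ c ∈ Finset.range Nb, c * g c = (if c = K then K * (r*d) else 0) := by
      intro c _
      simp only [hg_def]
      by_cases h : c = K
      · subst h; simp
      · by_cases h0 : c = 0
        · subst h0; simp [h]
        · simp [h, h0]
    rw [Finset.sum_congr rfl step,
      Finset.sum_ite_eq' (Finset.range Nb) K fun _ => K * (r*d), if_pos hKNb]
  have hhsum : ∑ c ∈ Finset.range Nb, c * (if c = d then r*K else 0) = d * (r*K) := by
    have step : ∀ c ∈ Finset.range Nb,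
        c * (if c = d then r*K else 0) = (if c = d then d * (r*K) else 0) := by
      intro c _
      by_cases h : c = d
      · subst h; simp
      · simp [h]
    rw [Finset.sum_congr rfl step,
      Finset.sum_ite_eq' (Finset.range Nb) d fun _ => d * (r*K), if_pos hdNb]
  have hgsum2 : ∑ c ∈ Finset.range Nb, g c = r*d + r*(K-d) := by
    have step : ∀ c ∈ Finset.range Nb,
        g c = (if c = K then r*d else 0) + (if c = 0 then r*(K-d) else 0) := by
      intro c _
      simp only [hg_def]
      by_cases h : c = K
      · subst h; simp [hK0']
      · by_cases h0 : c = 0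
        · subst h0; simp [h]
        · simp [h, h0]
    rw [Finset.sum_congr rfl step, Finset.sum_add_distrib,
      Finset.sum_ite_eq' (Finset.range Nb) K fun _ => r*d, if_pos hKNb,
      Finset.sum_ite_eq' (Finset.range Nb) 0 fun _ => r*(K-d), if_pos h0Nb]
  have hhsum2 : ∑ c ∈ Finset.range Nb, (if c = d then r*K else 0) = r*K := by
    rw [Finset.sum_ite_eq' (Finset.range Nb) d fun _ => r*K, if_pos hdNb]
  -- m' sums
  have hS1 : (∑ c ∈ Finset.range Nb, c * m' c) + 1 = n := by
    have l1 : ∑ c ∈ Finset.range Nb, c * m' c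
        = (∑ c ∈ Finset.range Nb, c * m'' c) + ∑ c ∈ Finset.range Nb, c * g c := by
      rw [← Finset.sum_add_distrib]
      apply Finset.sum_congr rfl
      intro c _
      simp only [hm'_def]
      ring
    have l2 : ∑ c ∈ Finset.range Nb, c * m c
        = (∑ c ∈ Finset.range Nb, c * m'' c)
          + ∑ c ∈ Finset.range Nb, c * (if c = d then r*K else 0) := by
      rw [← Finset.sum_add_distrib]
      apply Finset.sum_congr rfl
      intro c _
      rw [hm_eq c]
      ring
    have l3 : K * (r*d) = d * (r*K) := by ring
    rw [l1, hgsum, l3]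
    rw [l2, hhsum] at F2
    omega
  have hS2 : ∑ c ∈ Finset.range Nb, m' c = n := by
    have l1 : ∑ c ∈ Finset.range Nb, m' c
        = (∑ c ∈ Finset.range Nb, m'' c) + ∑ c ∈ Finset.range Nb, g c := by
      rw [← Finset.sum_add_distrib]
    have l2 : ∑ c ∈ Finset.range Nb, m c
        = (∑ c ∈ Finset.range Nb, m'' c)
          + ∑ c ∈ Finset.range Nb, (if c = d then r*K else 0) := by
      rw [← Finset.sum_add_distrib]
      exact Finset.sum_congr rfl fun c _ => hm_eq c
    have l3 : r*d + r*(K-d) = r*K := by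
      rw [← Nat.left_distrib]
      congr 1
      omega
    rw [l1, hgsum2, l3]
    rw [l2, hhsum2] at F1
    omega
  -- the caterpillar tree
  set L' : List ℕ := mkList Nb m' with hL'_def
  have hmem' : ∀ x ∈ L', 1 ≤ x := mkList_mem Nb m'
  have hsum' : L'.sum + 1 = n := by
    rw [hL'_def, mkList_sum]
    exact hS1
  have hsizecat : (cat L').size = n := by
    rw [size_cat L' hmem']
    omega
  -- the length identity
  have hlen' : m' 0 + L'.length = n := by
    rw [hL'_def, mkList_length]
    have split : ∀ c ∈ Finset.range Nb,
        m' c = (if c = 0 then m' c else 0) + (if c = 0 then 0 else m' c) := by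
      intro c _
      by_cases h : c = 0 <;> simp [h]
    have : ∑ c ∈ Finset.range Nb, m' c
        = m' 0 + ∑ c ∈ Finset.range Nb, (if c = 0 then 0 else m' c) := by
      rw [Finset.sum_congr rfl split, Finset.sum_add_distrib,
        Finset.sum_ite_eq' (Finset.range Nb) 0 fun c => m' c, if_pos h0Nb]
    rw [this] at hS2
    exact hS2
  -- weight of the caterpillar
  have hBv : treeWeight w (cat L') = ∏ c ∈ Finset.range Nb, w c ^ m' c := by
    have hw0ne : w 0 ^ L'.length ≠ 0 := pow_ne_zero _ (ne_of_gt hw0)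
    apply mul_right_cancel₀ hw0ne
    rw [weight_cat w L' hmem']
    have e1 : 1 + L'.sum = n := by omega
    rw [e1, hL'_def, mkList_prod]
    have e2 : ∏ c ∈ Finset.range Nb, w c ^ m' c
        = w 0 ^ m' 0 * ∏ c ∈ Finset.range Nb, (if c = 0 then 1 else w c ^ m' c) := by
      have split : ∀ c ∈ Finset.range Nb, w c ^ m' c
          = (if c = 0 then w 0 ^ m' 0 else 1) * (if c = 0 then 1 else w c ^ m' c) := by
        intro c _
        by_cases h : c = 0
        · subst h; simp
        · simp [h]
      rw [Finset.prod_congr rfl split, Finset.prod_mul_distrib,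
        Finset.prod_ite_eq' (Finset.range Nb) 0 fun _ => w 0 ^ m' 0, if_pos h0Nb]
    rw [e2]
    rw [show (mkList Nb m').length = L'.length from by rw [hL'_def]]
    have e3 : w 0 ^ m' 0 * (∏ c ∈ Finset.range Nb, if c = 0 then 1 else w c ^ m' c)
          * w 0 ^ L'.length
        = w 0 ^ (m' 0 + L'.length)
          * (∏ c ∈ Finset.range Nb, if c = 0 then 1 else w c ^ m' c) := by
      rw [pow_add]; ring
    rw [e3, hlen']
  -- factor the caterpillar weight
  have hB : (∏ c ∈ Finset.range Nb, w c ^ m' c)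
      = P * (w K ^ (r*d) * w 0 ^ (r*(K-d))) := by
    have step1 : ∀ c ∈ Finset.range Nb, w c ^ m' c = w c ^ m'' c * w c ^ g c := by
      intro c _
      rw [← pow_add]
    rw [Finset.prod_congr rfl step1, Finset.prod_mul_distrib, ← hP_def]
    congr 1
    have step2 : ∀ c ∈ Finset.range Nb, w c ^ g c
        = (if c = K then w K ^ (r*d) else 1) * (if c = 0 then w 0 ^ (r*(K-d)) else 1) := by
      intro c _
      simp only [hg_def]
      by_cases h : c = K
      · subst h; simp [hK0']
      · by_cases h0 : c = 0
        · subst h0; simp [h]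
        · simp [h, h0]
    rw [Finset.prod_congr rfl step2, Finset.prod_mul_distrib,
      Finset.prod_ite_eq' (Finset.range Nb) K fun _ => w K ^ (r*d), if_pos hKNb,
      Finset.prod_ite_eq' (Finset.range Nb) 0 fun _ => w 0 ^ (r*(K-d)), if_pos h0Nb]
  -- the core inequality
  have core : Q^n * w d ^ (r*K) ≤ w K ^ (r*d) * w 0 ^ (r*(K-d)) := by
    have hwd : w d ≤ W := hWc d hdC
    have e1 : Q^n ≤ Q^(J*(r*K)) := pow_le_pow_right₀ hQ1 hnJrK
    have e2 : w d ^ (r*K) ≤ W ^ (r*K) := pow_le_pow_left₀ (hpos d) hwd _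
    have e3 : Q^n * w d ^ (r*K) ≤ Q^(J*(r*K)) * W^(r*K) :=
      mul_le_mul e1 e2 (pow_nonneg (hpos d) _) (pow_nonneg hQ0.le _)
    have e4 : Q^(J*(r*K)) * W^(r*K) = M^(r*K) * β^(r*K) := by
      rw [pow_mul, ← mul_pow, ← mul_pow]
      congr 1
      rw [hM_def, div_mul_cancel₀ _ (ne_of_gt hβpos)]
    have eexp : r*K ≤ K*(r*d) := by
      calc r*K = K*r*1 := by ring
      _ ≤ K*r*d := Nat.mul_le_mul_left (K*r) hd1
      _ = K*(r*d) := by ring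
    have e6 : M^(r*K) ≤ M^(K*(r*d)) := pow_le_pow_right₀ hM1 eexp
    have e7 : β^(r*K) ≤ β^(r*(K-d)) :=
      pow_le_pow_of_le_one hβpos.le hβ1 (Nat.mul_le_mul_left r (Nat.sub_le K d))
    have e8 : M^(K*(r*d)) ≤ w K ^ (r*d) := by
      rw [pow_mul]
      exact pow_le_pow_left₀ (pow_nonneg hM0.le K) hwK _
    have e9 : β^(r*(K-d)) ≤ w 0 ^ (r*(K-d)) := pow_le_pow_left₀ hβpos.le hβ0 _
    calc Q^n * w d ^ (r*K) ≤ Q^(J*(r*K)) * W^(r*K) := e3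
    _ = M^(r*K) * β^(r*K) := e4
    _ ≤ M^(K*(r*d)) * β^(r*(K-d)) :=
        mul_le_mul e6 e7 (pow_nonneg hβpos.le _) (pow_nonneg hM0.le _)
    _ ≤ w K ^ (r*d) * w 0 ^ (r*(K-d)) :=
        mul_le_mul e8 e9 (pow_nonneg hβpos.le _) (pow_nonneg (hpos K) _)
  -- conclude
  calc Q^n * treeWeight w t = P * (Q^n * w d ^ (r*K)) := by rw [hA]; ring
  _ ≤ P * (w K ^ (r*d) * w 0 ^ (r*(K-d))) := mul_le_mul_of_nonneg_left core hP0
  _ = treeWeight w (cat L') := by rw [hBv, hB]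
  _ ≤ Zn w n := Zn_ge w hpos n _ hsizecat


/-- **Theorem (zero radius of convergence).** If the weight sequence `w` (with `w_0 > 0`
and `w_k > 0` for some `k ≥ 2`) has generating function of radius of convergence `0`,
then for every `ε > 0`, with very high probability the simply generated tree `𝒯_n` has
at least `(1 − ε) n` leaves. -/
theorem simply_generated_zero_radius_many_leaves (w : ℕ → ℝ) (hpos : ∀ k, 0 ≤ w k)
    (hw0 : 0 < w 0) (hk : ∃ k, 2 ≤ k ∧ 0 < w k) (hrho : sgRho w = 0) :
    ∀ ε : ℝ, 0 < ε → ∃ c : ℝ, 0 < c ∧ ∃ N : ℕ, ∀ n ≥ N, 0 < Zn w n →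
      sgProb w n {t : PlaneTree | (t.degCount 0 : ℝ) < (1 - ε) * n} ≤
        Real.exp (-c * n) := by
  intro ε hε
  classical
  set C : ℕ := max ⌈(2:ℝ)/ε⌉₊ 1 with hC_def
  have hC1 : 1 ≤ C := le_max_right _ _
  have hCε : 2/ε ≤ (C:ℝ) := by
    refine le_trans (Nat.le_ceil _) ?_
    exact_mod_cast le_max_left _ _
  set Q : ℝ := 4 * Real.exp 1 with hQ_def
  have hexp1 : 2 ≤ Real.exp 1 := by
    have := Real.add_one_le_exp 1
    linarith
  have hQ1 : 1 ≤ Q := by rw [hQ_def]; linarith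
  have hQ0 : (0:ℝ) < Q := lt_of_lt_of_le one_pos hQ1
  set W : ℝ := 1 + ∑ c ∈ Finset.range (C+1), w c with hW_def
  have hW1 : 1 ≤ W := by
    have : 0 ≤ ∑ c ∈ Finset.range (C+1), w c := Finset.sum_nonneg fun c _ => hpos c
    rw [hW_def]; linarith
  have hWc : ∀ c ≤ C, w c ≤ W := by
    intro c hc
    have := Finset.single_le_sum (f := w) (fun i _ => hpos i) (Finset.mem_range.2 (by omega : c < C+1))
    rw [hW_def]; linarith
  set β : ℝ := min 1 (w 0) with hβ_def
  have hβpos : 0 < β := lt_min one_pos hw0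
  have hβ1 : β ≤ 1 := min_le_left _ _
  have hβ0 : β ≤ w 0 := min_le_right _ _
  set J : ℕ := ⌈4*(C:ℝ)/ε⌉₊ with hJ_def
  have hJ : 4*(C:ℝ)/ε ≤ (J:ℝ) := Nat.le_ceil _
  have hQJ1 : 1 ≤ Q^J := by
    calc (1:ℝ) = 1^J := (one_pow J).symm
    _ ≤ Q^J := pow_le_pow_left₀ (by norm_num) hQ1 J
  have hM1 : 1 ≤ Q^J * W / β := by
    rw [le_div_iff₀ hβpos]
    nlinarith
  obtain ⟨K, hKC, hwK⟩ := exists_good w hpos hrho (Q^J * W / β) hM1 (C+1)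
  refine ⟨1, one_pos, ⌈4*(C:ℝ)*K/ε⌉₊ + 1, ?_⟩
  intro n hn hZ
  have hnN : 4*(C:ℝ)*(K:ℝ) ≤ ε*(n:ℝ) := by
    have h1 : 4*(C:ℝ)*K/ε ≤ ((⌈4*(C:ℝ)*K/ε⌉₊ : ℕ):ℝ) := Nat.le_ceil _
    have h2 : ((⌈4*(C:ℝ)*K/ε⌉₊ : ℕ):ℝ) ≤ (n:ℝ) := by
      have : (⌈4*(C:ℝ)*K/ε⌉₊ : ℕ) ≤ n := by omega
      exact_mod_cast this
    have h3 : 4*(C:ℝ)*K/ε ≤ (n:ℝ) := le_trans h1 h2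
    rw [div_le_iff₀ hε] at h3
    linarith [mul_comm (n:ℝ) ε]
  haveI instF : Fintype {tv : PlaneTree // tv.size = n ∧
      tv ∈ {t : PlaneTree | (t.degCount 0 : ℝ) < (1 - ε) * n}} := sizePFintype n _
  rw [sgProb, div_le_iff₀ hZ, tsum_fintype]
  have hQn0 : (0:ℝ) < Q^n := pow_pos hQ0 n
  have key : ∀ x : {tv : PlaneTree // tv.size = n ∧
      tv ∈ {t : PlaneTree | (t.degCount 0 : ℝ) < (1 - ε) * n}},
      treeWeight w x.1 ≤ Zn w n / Q^n := by
    rintro ⟨t, ht1, ht2⟩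
    rw [le_div_iff₀ hQn0]
    have hk := key_lemma w hpos hw0 ε Q W β hε hQ1 hW1 hβpos hβ1 hβ0 C J K hC1 hCε hWc hJ
      hKC hwK n hnN t ht1 ht2
    linarith
  have hcard : (Finset.univ : Finset {tv : PlaneTree // tv.size = n ∧
      tv ∈ {t : PlaneTree | (t.degCount 0 : ℝ) < (1 - ε) * n}}).card ≤ 2^(2*n) := by
    rw [Finset.card_univ]
    have := @Fintype.card_le_of_injective _ (List.Vector Bool (2*n)) instF _
      (fun t => (⟨PlaneTree.enc t.1, by
        rw [PlaneTree.enc_length, t.2.1]⟩ : List.Vector Bool (2*n)))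
      (fun a b h => by
        apply Subtype.ext
        apply PlaneTree.enc_injective
        exact congrArg Subtype.val h)
    rwa [card_vector, Fintype.card_bool] at this
  have hZQ0 : 0 ≤ Zn w n / Q^n := le_of_lt (div_pos hZ hQn0)
  calc (∑ x : {tv : PlaneTree // tv.size = n ∧
        tv ∈ {t : PlaneTree | (t.degCount 0 : ℝ) < (1 - ε) * n}}, treeWeight w x.1)
      ≤ (Finset.univ : Finset {tv : PlaneTree // tv.size = n ∧
        tv ∈ {t : PlaneTree | (t.degCount 0 : ℝ) < (1 - ε) * n}}).card • (Zn w n / Q^n) :=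
        Finset.sum_le_card_nsmul _ _ _ (fun x _ => key x)
  _ ≤ (2^(2*n) : ℕ) • (Zn w n / Q^n) := by
      apply nsmul_le_nsmul_left hZQ0 hcard
  _ = ((2:ℝ))^(2*n) * (Zn w n / Q^n) := by
      rw [nsmul_eq_mul]
      norm_num
  _ = Real.exp (-1 * n) * Zn w n := by
      rw [show ((2:ℝ))^(2*n) = 4^n from by rw [pow_mul]; norm_num]
      rw [show (4:ℝ)^n * (Zn w n / Q^n) = (4/Q)^n * Zn w n from by
        rw [div_pow]; field_simp]
      congr 1
      rw [show (4:ℝ)/Q = Real.exp (-1) from by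
        rw [hQ_def, Real.exp_neg]; field_simp]
      rw [← Real.exp_nat_mul]
      congr 1
      push_cast
      ring
end
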